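/- arXiv:0804.4046 — 11 statements merged into one kernel-verified Lean document; each statement's English description precedes it below -/
import Mathlib

section
/- Let (Ω, μ) be a probability space, let N ≥ 1, and for each site n ∈ {1,…,N} let S_n ≥ 1. For each n and each setting s ∈ {1,…,S_n} let Λ_n^{(s)} be a measurable space, X_n^{(s)} : Ω → Λ_n^{(s)} a measurable map, and φ_n^{(s)} : Λ_n^{(s)} → ℝ a bounded measurable function. For each n let Φ_n ⊆ ℝ^{S_n} be the range of the vector-valued map λ ↦ (φ_n^{(1)}(λ^{(1)}),…,φ_n^{(S_n)}(λ^{(S_n)})) as λ = (λ^{(1)},…,λ^{(S_n)}) ranges over Λ_n^{(1)} × ⋯ × Λ_n^{(S_n)}. Then for any real coefficients γ_{(s_1,…,s_N)}: inf over (ξ_1,…,ξ_N) ∈ Φ_1 × ⋯ × Φ_N of ∑_{s_1,…,s_N} γ_{(s_1,…,s_N)} ξ_1^{(s_1)} ⋯ ξ_N^{(s_N)} ≤ ∑_{s_1,…,s_N} γ_{(s_1,…,s_N)} ∫_Ω φ_1^{(s_1)}(X_1^{(s_1)}(ω)) ⋯ φ_N^{(s_N)}(X_N^{(s_N)}(ω))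 dμ(ω) ≤ sup over (ξ_1,…,ξ_N) ∈ Φ_1 × ⋯ × Φ_N of the same N-linear expression. -/
open MeasureTheory

/-- Theorem 1, inequality (9): the tight linear LHV constraint on product expectations.
`Φ n` is the range of the vector-valued map `λ ↦ (φ n 1 (λ 1), …, φ n Sₙ (λ Sₙ))`. -/
theorem stmt_1 {Ω : Type*} [MeasurableSpace Ω] (μ : Measure Ω) [IsProbabilityMeasure μ]
    (N : ℕ) (hN : 1 ≤ N) (S : Fin N → ℕ) (hS : ∀ n, 1 ≤ S n)
    (Λ : (n : Fin N) → Fin (S n) → Type*)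
    [∀ n s, MeasurableSpace (Λ n s)]
    (X : (n : Fin N) → (s : Fin (S n)) → Ω → Λ n s)
    (hX : ∀ n s, Measurable (X n s))
    (φ : (n : Fin N) → (s : Fin (S n)) → Λ n s → ℝ)
    (hφmeas : ∀ n s, Measurable (φ n s))
    (hφbd : ∀ n s, ∃ C : ℝ, ∀ x, |φ n s x| ≤ C)
    (γ : ((n : Fin N) → Fin (S n)) → ℝ) :
    let Φ : (n : Fin N) → Set (Fin (S n) → ℝ) := fun n =>
      Set.range (fun (lam : (t : Fin (S n)) → Λ n t) => fun t => φ n t (lam t))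
    let F : ((n : Fin N) → Fin (S n) → ℝ) → ℝ := fun ξ =>
      ∑ s : (n : Fin N) → Fin (S n), γ s * ∏ n, ξ n (s n)
    (sInf (F '' {ξ | ∀ n, ξ n ∈ Φ n}) ≤
      ∑ s : (n : Fin N) → Fin (S n), γ s * ∫ ω, ∏ n, φ n (s n) (X n (s n) ω) ∂μ) ∧
    ((∑ s : (n : Fin N) → Fin (S n), γ s * ∫ ω, ∏ n, φ n (s n) (X n (s n) ω) ∂μ) ≤
      sSup (F '' {ξ | ∀ n, ξ n ∈ Φ n})) := by
  intro Φ F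
  -- nonnegative bounds for φ
  choose C0 hC0 using hφbd
  set C : (n : Fin N) → Fin (S n) → ℝ := fun n t => max (C0 n t) 0 with hC
  have hCnonneg : ∀ n t, 0 ≤ C n t := fun n t => le_max_right _ _
  have hCbd : ∀ n t x, |φ n t x| ≤ C n t := fun n t x =>
    (hC0 n t x).trans (le_max_left _ _)
  set B : ℝ := ∑ s : (n : Fin N) → Fin (S n), |γ s| * ∏ n, C n (s n) with hB
  -- |F ξ| ≤ B for ξ in the constraint set
  have hFbd : ∀ ξ ∈ {ξ : (n : Fin N) → Fin (S n) → ℝ | ∀ n, ξ n ∈ Φ n}, |F ξ| ≤ B := by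
    intro ξ hξ
    have hξbd : ∀ n t, |ξ n t| ≤ C n t := by
      intro n t
      obtain ⟨lam, hlam⟩ := hξ n
      have : ξ n t = φ n t (lam t) := by rw [← hlam]
      rw [this]; exact hCbd n t _
    calc |F ξ| ≤ ∑ s : (n : Fin N) → Fin (S n), |γ s * ∏ n, ξ n (s n)| :=
          Finset.abs_sum_le_sum_abs _ _
      _ ≤ B := by
          rw [hB]
          apply Finset.sum_le_sum
          intro s _
          rw [abs_mul, Finset.abs_prod]
          apply mul_le_mul_of_nonneg_left _ (abs_nonneg _)
          exact Finset.prod_le_prod (fun n _ => abs_nonneg _) (fun n _ => hξbd n (s n))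
  have hbddB : BddBelow (F '' {ξ | ∀ n, ξ n ∈ Φ n}) := by
    refine ⟨-B, ?_⟩
    rintro y ⟨ξ, hξ, rfl⟩
    exact neg_le_of_abs_le (hFbd ξ hξ)
  have hbddA : BddAbove (F '' {ξ | ∀ n, ξ n ∈ Φ n}) := by
    refine ⟨B, ?_⟩
    rintro y ⟨ξ, hξ, rfl⟩
    exact le_of_abs_le (hFbd ξ hξ)
  -- pointwise function g ω = F (ξ(ω))
    -- integrability of each product term
  have hmeas : ∀ s : (n : Fin N) → Fin (S n),
      Measurable fun ω => ∏ n, φ n (s n) (X n (s n) ω) := by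
    intro s
    exact Finset.measurable_prod _ (fun n _ => (hφmeas n (s n)).comp (hX n (s n)))
  have hint : ∀ s : (n : Fin N) → Fin (S n),
      Integrable (fun ω => ∏ n, φ n (s n) (X n (s n) ω)) μ := by
    intro s
    refine ⟨(hmeas s).aestronglyMeasurable, ?_⟩
    apply MeasureTheory.HasFiniteIntegral.of_bounded
      (C := ∏ n, C n (s n))
    filter_upwards with ω
    rw [Real.norm_eq_abs, Finset.abs_prod]
    exact Finset.prod_le_prod (fun n _ => abs_nonneg _) (fun n _ => hCbd n (s n) _)
  set g : Ω → ℝ := fun ω => F (fun n t => φ n t (X n t ω)) with hg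
  have hgint : Integrable g μ := by
    rw [hg]
    apply integrable_finset_sum
    intro s _
    exact (hint s).const_mul (γ s)
  have hgintval : ∫ ω, g ω ∂μ =
      ∑ s : (n : Fin N) → Fin (S n), γ s * ∫ ω, ∏ n, φ n (s n) (X n (s n) ω) ∂μ := by
    rw [hg]
    simp only [F]
    rw [integral_finset_sum _ (fun s _ => (hint s).const_mul (γ s))]
    exact Finset.sum_congr rfl (fun s _ => integral_const_mul _ _)
  have hmem : ∀ ω, g ω ∈ F '' {ξ | ∀ n, ξ n ∈ Φ n} := by
    intro ω
    exact ⟨fun n t => φ n t (X n t ω), fun n => ⟨fun t => X n t ω, rfl⟩, rfl⟩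
  constructor
  · calc sInf (F '' {ξ | ∀ n, ξ n ∈ Φ n})
        = ∫ _ω, sInf (F '' {ξ | ∀ n, ξ n ∈ Φ n}) ∂μ := by
          rw [integral_const]; simp
      _ ≤ ∫ ω, g ω ∂μ :=
          integral_mono (integrable_const _) hgint (fun ω => csInf_le hbddB (hmem ω))
      _ = _ := hgintval
  · calc (∑ s : (n : Fin N) → Fin (S n), γ s * ∫ ω, ∏ n, φ n (s n) (X n (s n) ω) ∂μ)
        = ∫ ω, g ω ∂μ := hgintval.symm
      _ ≤ ∫ _ω, sSup (F '' {ξ | ∀ n, ξ n ∈ Φ n}) ∂μ :=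
          integral_mono hgint (integrable_const _) (fun ω => le_csSup hbddA (hmem ω))
      _ = _ := by rw [integral_const]; simp
end

section
/- Let (Ω, μ) be a probability space, N ≥ 1, and for each site n ∈ {1,…,N} and each setting s ∈ {1,…,S_n} let X_n^{(s)} : Ω → ℝ be a measurable function with values in a set Λ_n^{(s)} ⊆ [-1,1] satisfying sup Λ_n^{(s)} = 1 and inf Λ_n^{(s)} = -1. For arbitrary real coefficients γ_{(s_{n_1},…,s_{n_M})} indexed by nonempty subsets {n_1 < ⋯ < n_M} ⊆ {1,…,N} and setting choices s_{n_m} ∈ {1,…,S_{n_m}}, define W(η_1,…,η_N) = ∑_{M=1}^{N} ∑_{n_1<⋯<n_M} ∑_{s_{n_1},…,s_{n_M}} γ_{(s_{n_1},…,s_{n_M})} η_{n_1}^{(s_{n_1})} ⋯ η_{n_M}^{(s_{n_M})}. Then min over (η_1,…,η_N) ∈ {-1,1}^{S_1} × ⋯ × {-1,1}^{S_N} of W ≤ ∑_{M=1}^{N} ∑_{n_1<⋯<n_M} ∑_{s_{n_1},…,s_{n_M}} γ_{(s_{n_1},…,s_{n_M})} ∫_Ω X_{n_1}^{(s_{n_1})}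 ⋯ X_{n_M}^{(s_{n_M})} dμ ≤ max over (η_1,…,η_N) ∈ {-1,1}^{S_1} × ⋯ × {-1,1}^{S_N} of W. -/
open MeasureTheory


lemma keyA {I : Type*} [Fintype I] [DecidableEq I] (x : I → ℝ) (A : Finset I) :
    ∑ ε : I → Bool, (∏ i, (if ε i then (1 + x i)/2 else (1 - x i)/2)) *
      ∏ i ∈ A, (if ε i then (1:ℝ) else -1) = ∏ i ∈ A, x i := by
  have h1 : ∀ ε : I → Bool,
      (∏ i, (if ε i then (1 + x i)/2 else (1 - x i)/2)) *
        ∏ i ∈ A, (if ε i then (1:ℝ) else -1)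
        = ∏ i, ((if ε i then (1 + x i)/2 else (1 - x i)/2) *
            (if i ∈ A then (if ε i then (1:ℝ) else -1) else 1)) := by
    intro ε
    rw [Finset.prod_mul_distrib]
    congr 1
    rw [Finset.prod_ite_mem, Finset.univ_inter]
  simp only [h1]
  have key := Finset.prod_univ_sum (t := fun _ : I => (Finset.univ : Finset Bool))
    (f := fun i b => (if b then (1 + x i)/2 else (1 - x i)/2) *
      (if i ∈ A then (if b then (1:ℝ) else -1) else 1))
  rw [← Fintype.piFinset_univ, ← key]
  have h2 : ∀ i : I, (∑ b : Bool, ((if b then (1 + x i)/2 else (1 - x i)/2) *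
      (if i ∈ A then (if b then (1:ℝ) else -1) else 1))) = if i ∈ A then x i else 1 := by
    intro i
    by_cases h : i ∈ A <;> simp [Fintype.sum_bool, h] <;> ring
  simp only [h2]
  rw [Finset.prod_ite_mem, Finset.univ_inter]

/-- The linear combination of multilinear forms. -/
noncomputable def Wf {N : ℕ} {S : Fin N → ℕ} (γ : (T : Finset (Fin N)) → ((n : T) → Fin (S n.1)) → ℝ)
    (η : (n : Fin N) → Fin (S n) → ℝ) : ℝ :=
  ∑ T ∈ Finset.univ.powerset.filter (fun T : Finset (Fin N) => T.Nonempty),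
    ∑ s : (n : T) → Fin (S n.1), γ T s * ∏ n : T, η n.1 (s n)

/-- weight of a vertex -/
noncomputable def pw {N : ℕ} {S : Fin N → ℕ} (x : (n : Fin N) → Fin (S n) → ℝ)
    (ε : (Σ n : Fin N, Fin (S n)) → Bool) : ℝ :=
  ∏ i : Σ n : Fin N, Fin (S n), (if ε i then (1 + x i.1 i.2)/2 else (1 - x i.1 i.2)/2)

lemma pw_nonneg {N : ℕ} {S : Fin N → ℕ} (x : (n : Fin N) → Fin (S n) → ℝ)
    (hx : ∀ n t, x n t ∈ Set.Icc (-1:ℝ) 1) (ε : (Σ n : Fin N, Fin (S n)) → Bool) :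
    0 ≤ pw x ε := by
  refine Finset.prod_nonneg fun i _ => ?_
  rcases hx i.1 i.2 with ⟨h1, h2⟩
  split <;> linarith

lemma pw_sum {N : ℕ} {S : Fin N → ℕ} (x : (n : Fin N) → Fin (S n) → ℝ) :
    ∑ ε : (Σ n : Fin N, Fin (S n)) → Bool, pw x ε = 1 := by
  have := keyA (fun i : Σ n : Fin N, Fin (S n) => x i.1 i.2) (∅ : Finset (Σ n : Fin N, Fin (S n)))
  simpa [pw] using this

lemma convex_repr {N : ℕ} {S : Fin N → ℕ}
    (γ : (T : Finset (Fin N)) → ((n : T) → Fin (S n.1)) → ℝ)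
    (x : (n : Fin N) → Fin (S n) → ℝ) :
    Wf γ x = ∑ ε : (Σ n : Fin N, Fin (S n)) → Bool,
      pw x ε * Wf γ (fun n t => if ε ⟨n, t⟩ then 1 else -1) := by
  unfold Wf
  simp only [Finset.mul_sum]
  rw [Finset.sum_comm]
  refine Finset.sum_congr rfl (fun T hT => ?_)
  rw [Finset.sum_comm]
  refine Finset.sum_congr rfl (fun s _ => ?_)
  simp only [mul_left_comm (pw x _), ← Finset.mul_sum]
  congr 1
  have hinj : ∀ a ∈ T.attach, ∀ b ∈ T.attach,
      (⟨a.1, s a⟩ : Σ n : Fin N, Fin (S n)) = ⟨b.1, s b⟩ → a = b := by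
    intro a _ b _ h
    exact Subtype.ext (congrArg Sigma.fst h)
  have hk := keyA (fun i : Σ n : Fin N, Fin (S n) => x i.1 i.2)
    (T.attach.image (fun n => (⟨n.1, s n⟩ : Σ n : Fin N, Fin (S n))))
  rw [Finset.prod_image hinj] at hk
  simp only [Finset.prod_image hinj] at hk
  have h1 : ∏ n : T, x n.1 (s n) = ∏ n ∈ T.attach, x n.1 (s n) := by
    rw [Finset.univ_eq_attach]
  rw [h1, ← hk]
  refine Finset.sum_congr rfl (fun ε _ => ?_)
  rw [Finset.univ_eq_attach]
  rfl

lemma bounds_pt {N : ℕ} {S : Fin N → ℕ}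
    (γ : (T : Finset (Fin N)) → ((n : T) → Fin (S n.1)) → ℝ)
    (x : (n : Fin N) → Fin (S n) → ℝ) (hx : ∀ n t, x n t ∈ Set.Icc (-1:ℝ) 1) :
    (⨅ ε : (n : Fin N) → Fin (S n) → Bool, Wf γ (fun n t => if ε n t then 1 else -1)) ≤ Wf γ x ∧
    Wf γ x ≤ ⨆ ε : (n : Fin N) → Fin (S n) → Bool, Wf γ (fun n t => if ε n t then 1 else -1) := by
  have hbb : BddBelow (Set.range fun ε : (n : Fin N) → Fin (S n) → Bool =>
      Wf γ (fun n t => if ε n t then 1 else -1)) := (Set.finite_range _).bddBelow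
  have hba : BddAbove (Set.range fun ε : (n : Fin N) → Fin (S n) → Bool =>
      Wf γ (fun n t => if ε n t then 1 else -1)) := (Set.finite_range _).bddAbove
  rw [convex_repr γ x]
  constructor
  · calc (⨅ ε : (n : Fin N) → Fin (S n) → Bool, Wf γ (fun n t => if ε n t then 1 else -1))
        = ∑ ε : (Σ n : Fin N, Fin (S n)) → Bool,
            pw x ε * (⨅ ε : (n : Fin N) → Fin (S n) → Bool,
              Wf γ (fun n t => if ε n t then 1 else -1)) := by
          rw [← Finset.sum_mul, pw_sum, one_mul]
      _ ≤ _ := by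
          refine Finset.sum_le_sum fun ε _ => ?_
          exact mul_le_mul_of_nonneg_left (ciInf_le hbb (fun n t => ε ⟨n, t⟩)) (pw_nonneg x hx ε)
  · calc ∑ ε : (Σ n : Fin N, Fin (S n)) → Bool,
            pw x ε * Wf γ (fun n t => if ε ⟨n, t⟩ then 1 else -1)
        ≤ ∑ ε : (Σ n : Fin N, Fin (S n)) → Bool,
            pw x ε * (⨆ ε : (n : Fin N) → Fin (S n) → Bool,
              Wf γ (fun n t => if ε n t then 1 else -1)) := by
          refine Finset.sum_le_sum fun ε _ => ?_
          exact mul_le_mul_of_nonneg_left (le_ciSup hba (fun n t => ε ⟨n, t⟩)) (pw_nonneg x hx ε)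
      _ = _ := by rw [← Finset.sum_mul, pw_sum, one_mul]

/-- Corollary 1: the tight linear LHV constraint on all correlation functions. The
coefficients `γ` are indexed by nonempty subsets `T` of sites together with a setting
choice at each site of `T`; the bounds are the extrema of the corresponding sum of
multilinear forms over the vertices `{-1,1}^{S₁} × ⋯ × {-1,1}^{S_N}`. -/
theorem stmt_4 {Ω : Type*} [MeasurableSpace Ω] (μ : Measure Ω) [IsProbabilityMeasure μ]
    (N : ℕ) (hN : 1 ≤ N) (S : Fin N → ℕ) (hS : ∀ n, 1 ≤ S n)
    (Λ : (n : Fin N) → Fin (S n) → Set ℝ)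
    (hΛ : ∀ n s, Λ n s ⊆ Set.Icc (-1 : ℝ) 1)
    (hsup : ∀ n s, sSup (Λ n s) = 1) (hinf : ∀ n s, sInf (Λ n s) = -1)
    (X : (n : Fin N) → Fin (S n) → Ω → ℝ)
    (hX : ∀ n s, Measurable (X n s))
    (hrange : ∀ n s ω, X n s ω ∈ Λ n s)
    (γ : (T : Finset (Fin N)) → ((n : T) → Fin (S n.1)) → ℝ) :
    let W : ((n : Fin N) → Fin (S n) → ℝ) → ℝ := fun η =>
      ∑ T ∈ Finset.univ.powerset.filter (fun T : Finset (Fin N) => T.Nonempty),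
        ∑ s : (n : T) → Fin (S n.1), γ T s * ∏ n : T, η n.1 (s n)
    ((⨅ ε : (n : Fin N) → Fin (S n) → Bool,
        W (fun n t => if ε n t then 1 else -1)) ≤
      ∑ T ∈ Finset.univ.powerset.filter (fun T : Finset (Fin N) => T.Nonempty),
        ∑ s : (n : T) → Fin (S n.1), γ T s * ∫ ω, ∏ n : T, X n.1 (s n) ω ∂μ) ∧
    ((∑ T ∈ Finset.univ.powerset.filter (fun T : Finset (Fin N) => T.Nonempty),
        ∑ s : (n : T) → Fin (S n.1), γ T s * ∫ ω, ∏ n : T, X n.1 (s n) ω ∂μ) ≤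
      ⨆ ε : (n : Fin N) → Fin (S n) → Bool,
        W (fun n t => if ε n t then 1 else -1)) := by
  intro W
  have hx : ∀ ω, ∀ n t, (fun n t => X n t ω) n t ∈ Set.Icc (-1:ℝ) 1 :=
    fun ω n t => hΛ n t (hrange n t ω)
  -- integrability of products
  have hint : ∀ (T : Finset (Fin N)) (s : (n : T) → Fin (S n.1)),
      Integrable (fun ω => ∏ n : T, X n.1 (s n) ω) μ := by
    intro T s
    have hm : Measurable (fun ω => ∏ n : T, X n.1 (s n) ω) :=
      Finset.measurable_prod _ (fun n _ => hX n.1 (s n))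
    refine (integrable_const (1:ℝ)).mono' hm.aestronglyMeasurable (ae_of_all _ fun ω => ?_)
    rw [Real.norm_eq_abs, Finset.abs_prod]
    refine Finset.prod_le_one (fun n _ => abs_nonneg _) (fun n _ => abs_le.mpr ?_)
    exact ⟨(hx ω n.1 (s n)).1, (hx ω n.1 (s n)).2⟩
  have hWint : Integrable (fun ω => Wf γ (fun n t => X n t ω)) μ := by
    unfold Wf
    refine integrable_finset_sum _ fun T _ => integrable_finset_sum _ fun s _ => ?_
    exact (hint T s).const_mul _
  have heq : (∑ T ∈ Finset.univ.powerset.filter (fun T : Finset (Fin N) => T.Nonempty),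
        ∑ s : (n : T) → Fin (S n.1), γ T s * ∫ ω, ∏ n : T, X n.1 (s n) ω ∂μ)
      = ∫ ω, Wf γ (fun n t => X n t ω) ∂μ := by
    unfold Wf
    rw [integral_finset_sum _ (fun T _ => integrable_finset_sum _ fun s _ => (hint T s).const_mul _)]
    refine Finset.sum_congr rfl fun T _ => ?_
    rw [integral_finset_sum _ (fun s _ => (hint T s).const_mul _)]
    refine Finset.sum_congr rfl fun s _ => ?_
    rw [MeasureTheory.integral_const_mul]
  have hW : W = Wf γ := rfl
  rw [hW, heq]
  constructor
  · calc (⨅ ε : (n : Fin N) → Fin (S n) → Bool, Wf γ (fun n t => if ε n t then 1 else -1))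
        = ∫ _ω, (⨅ ε : (n : Fin N) → Fin (S n) → Bool,
            Wf γ (fun n t => if ε n t then 1 else -1)) ∂μ := by
          rw [integral_const]; simp
      _ ≤ _ := integral_mono (integrable_const _) hWint
            (fun ω => (bounds_pt γ _ (hx ω)).1)
  · calc ∫ ω, Wf γ (fun n t => X n t ω) ∂μ
        ≤ ∫ _ω, (⨆ ε : (n : Fin N) → Fin (S n) → Bool,
            Wf γ (fun n t => if ε n t then 1 else -1)) ∂μ :=
          integral_mono hWint (integrable_const _) (fun ω => (bounds_pt γ _ (hx ω)).2)
      _ = _ := by rw [integral_const]; simp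
end

section
/- Let (Ω, μ) be a probability space, N ≥ 1, and for each site n ∈ {1,…,N} and each setting s ∈ {1,…,S_n} let X_n^{(s)} : Ω → ℝ be a measurable function with values in a set Λ_n^{(s)} ⊆ [-1,1] satisfying sup Λ_n^{(s)} = 1 and inf Λ_n^{(s)} = -1. Then for any real coefficients γ_{(s_1,…,s_N)}: | ∑_{s_1,…,s_N} γ_{(s_1,…,s_N)} ∫_Ω X_1^{(s_1)} ⋯ X_N^{(s_N)} dμ | ≤ max over η_1 ∈ {-1,1}^{S_1}, …, η_N ∈ {-1,1}^{S_N} of | ∑_{s_1,…,s_N} γ_{(s_1,…,s_N)} η_1^{(s_1)} ⋯ η_N^{(s_N)} |. -/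
open MeasureTheory

private lemma cube_key {N : ℕ} {S : Fin N → ℕ}
    (γ : ((n : Fin N) → Fin (S n)) → ℝ) (M : ℝ)
    (hM : ∀ ε : (n : Fin N) → Fin (S n) → Bool,
      |∑ s : (n : Fin N) → Fin (S n), γ s * ∏ n, (if ε n (s n) then (1:ℝ) else -1)| ≤ M)
    (T : Finset ((n : Fin N) × Fin (S n))) :
    ∀ y : ((n : Fin N) × Fin (S n)) → ℝ,
      (∀ i, y i ∈ Set.Icc (-1:ℝ) 1) →
      (∀ i ∉ T, y i = 1 ∨ y i = -1) →
      |∑ s : (n : Fin N) → Fin (S n), γ s * ∏ n, y ⟨n, s n⟩| ≤ M := by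
  classical
  induction T using Finset.induction_on with
  | empty =>
    intro y hy1 hy2
    set ε : (n : Fin N) → Fin (S n) → Bool := fun n s => if y ⟨n, s⟩ = 1 then true else false
      with hε
    have hval : ∀ s : (n : Fin N) → Fin (S n),
        (∏ n, y ⟨n, s n⟩) = ∏ n, (if ε n (s n) then (1:ℝ) else -1) := by
      intro s
      refine Finset.prod_congr rfl fun n _ => ?_
      rcases hy2 ⟨n, s n⟩ (Finset.notMem_empty _) with h | h
      · simp [hε, h]
      · have hne : y ⟨n, s n⟩ ≠ 1 := by rw [h]; norm_num
        simp only [hε, h, hne, if_false]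
        norm_num
    calc |∑ s : (n : Fin N) → Fin (S n), γ s * ∏ n, y ⟨n, s n⟩|
        = |∑ s : (n : Fin N) → Fin (S n), γ s * ∏ n, (if ε n (s n) then (1:ℝ) else -1)| := by
          congr 1; exact Finset.sum_congr rfl fun s _ => by rw [hval s]
      _ ≤ M := hM ε
  | @insert i T hiT ih =>
    intro y hy1 hy2
    obtain ⟨m, r⟩ := i
    set t : ℝ := (y ⟨m, r⟩ + 1) / 2 with ht
    have hmem := hy1 ⟨m, r⟩
    have ht0 : 0 ≤ t := by
      rw [ht]; have := hmem.1; linarith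
    have ht1 : t ≤ 1 := by
      rw [ht]; have := hmem.2; linarith
    -- the two endpoint updates satisfy the induction hypothesis
    have hupd : ∀ a : ℝ, a = 1 ∨ a = -1 →
        |∑ s : (n : Fin N) → Fin (S n), γ s *
          ∏ n, Function.update y ⟨m, r⟩ a ⟨n, s n⟩| ≤ M := by
      intro a ha
      refine ih _ (fun i => ?_) (fun i hi => ?_)
      · rw [Function.update_apply]
        split_ifs
        · rcases ha with h | h <;> simp [h, Set.mem_Icc]
        · exact hy1 i
      · rw [Function.update_apply]
        split_ifs with h
        · exact ha
        · exact hy2 i (by simp [Finset.mem_insert, h, hi])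
    -- affinity of each product in the coordinate ⟨m, r⟩
    have hps : ∀ s : (n : Fin N) → Fin (S n),
        (∏ n, Function.update y ⟨m, r⟩ (2*t - 1) ⟨n, s n⟩)
          = t * (∏ n, Function.update y ⟨m, r⟩ 1 ⟨n, s n⟩)
            + (1 - t) * (∏ n, Function.update y ⟨m, r⟩ (-1) ⟨n, s n⟩) := by
      intro s
      by_cases h : s m = r
      · have key : ∀ a : ℝ, (∏ n, Function.update y ⟨m, r⟩ a ⟨n, s n⟩)
            = a * ∏ n ∈ Finset.univ.erase m, y ⟨n, s n⟩ := by
          intro a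
          rw [← Finset.mul_prod_erase Finset.univ _ (Finset.mem_univ m)]
          congr 1
          · have hmk : (⟨m, s m⟩ : (n : Fin N) × Fin (S n)) = ⟨m, r⟩ := by rw [h]
            rw [hmk, Function.update_self]
          · refine Finset.prod_congr rfl fun n hn => ?_
            have hnm : n ≠ m := (Finset.mem_erase.mp hn).1
            have hne : (⟨n, s n⟩ : (n : Fin N) × Fin (S n)) ≠ ⟨m, r⟩ := by
              intro heq
              exact hnm (congrArg Sigma.fst heq)
            rw [Function.update_apply, if_neg hne]
        rw [key, key, key]; ring
      · have key : ∀ a : ℝ, (∏ n, Function.update y ⟨m, r⟩ a ⟨n, s n⟩)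
            = ∏ n, y ⟨n, s n⟩ := by
          intro a
          refine Finset.prod_congr rfl fun n _ => ?_
          have hne : (⟨n, s n⟩ : (n : Fin N) × Fin (S n)) ≠ ⟨m, r⟩ := by
            intro heq
            have hnm : n = m := congrArg Sigma.fst heq
            subst hnm
            exact h (by
              have := (Sigma.mk.inj_iff.mp heq).2
              exact eq_of_heq this)
          rw [Function.update_apply, if_neg hne]
        rw [key, key, key]; ring
    have hyeq : y = Function.update y ⟨m, r⟩ (2*t - 1) := by
      have h2t : 2*t - 1 = y ⟨m, r⟩ := by rw [ht]; ring
      rw [h2t, Function.update_eq_self]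
    have hsum : (∑ s : (n : Fin N) → Fin (S n), γ s * ∏ n, y ⟨n, s n⟩)
        = t * (∑ s : (n : Fin N) → Fin (S n), γ s *
            ∏ n, Function.update y ⟨m, r⟩ 1 ⟨n, s n⟩)
          + (1 - t) * (∑ s : (n : Fin N) → Fin (S n), γ s *
            ∏ n, Function.update y ⟨m, r⟩ (-1) ⟨n, s n⟩) := by
      rw [Finset.mul_sum, Finset.mul_sum, ← Finset.sum_add_distrib]
      refine Finset.sum_congr rfl fun s _ => ?_
      conv_lhs => rw [hyeq]
      rw [hps s]; ring
    rw [hsum]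
    have h1 := hupd 1 (Or.inl rfl)
    have h2 := hupd (-1) (Or.inr rfl)
    set A := ∑ s : (n : Fin N) → Fin (S n), γ s *
        ∏ n, Function.update y ⟨m, r⟩ 1 ⟨n, s n⟩ with hA
    set B := ∑ s : (n : Fin N) → Fin (S n), γ s *
        ∏ n, Function.update y ⟨m, r⟩ (-1) ⟨n, s n⟩ with hB
    have habs : |t * A + (1 - t) * B| ≤ t * |A| + (1 - t) * |B| := by
      calc |t * A + (1 - t) * B| ≤ |t * A| + |(1 - t) * B| := abs_add_le _ _
        _ = t * |A| + (1 - t) * |B| := by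
            rw [abs_mul, abs_mul, abs_of_nonneg ht0,
              abs_of_nonneg (by linarith : (0:ℝ) ≤ 1 - t)]
    refine le_trans habs ?_
    nlinarith [mul_le_mul_of_nonneg_left h1 ht0,
      mul_le_mul_of_nonneg_left h2 (by linarith : (0:ℝ) ≤ 1 - t)]

/-- Corollary 2: the tight linear LHV constraint on full correlation functions, in
absolute-value form; the bound is the maximum of `|F_N^{(γ)}|` over the vertices
`{-1,1}^{S₁} × ⋯ × {-1,1}^{S_N}`. -/
theorem stmt_5 {Ω : Type*} [MeasurableSpace Ω] (μ : Measure Ω) [IsProbabilityMeasure μ]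
    (N : ℕ) (hN : 1 ≤ N) (S : Fin N → ℕ) (hS : ∀ n, 1 ≤ S n)
    (Λ : (n : Fin N) → Fin (S n) → Set ℝ)
    (hΛ : ∀ n s, Λ n s ⊆ Set.Icc (-1 : ℝ) 1)
    (hsup : ∀ n s, sSup (Λ n s) = 1) (hinf : ∀ n s, sInf (Λ n s) = -1)
    (X : (n : Fin N) → Fin (S n) → Ω → ℝ)
    (hX : ∀ n s, Measurable (X n s))
    (hrange : ∀ n s ω, X n s ω ∈ Λ n s)
    (γ : ((n : Fin N) → Fin (S n)) → ℝ) :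
    |∑ s : (n : Fin N) → Fin (S n), γ s * ∫ ω, ∏ n, X n (s n) ω ∂μ| ≤
      ⨆ ε : (n : Fin N) → Fin (S n) → Bool,
        |∑ s : (n : Fin N) → Fin (S n),
          γ s * ∏ n, (if ε n (s n) then (1 : ℝ) else -1)| := by
  classical
  set M : ℝ := ⨆ ε : (n : Fin N) → Fin (S n) → Bool,
      |∑ s : (n : Fin N) → Fin (S n),
        γ s * ∏ n, (if ε n (s n) then (1 : ℝ) else -1)| with hM
  have hbdd : BddAbove (Set.range fun ε : (n : Fin N) → Fin (S n) → Bool =>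
      |∑ s : (n : Fin N) → Fin (S n),
        γ s * ∏ n, (if ε n (s n) then (1 : ℝ) else -1)|) :=
    (Set.finite_range _).bddAbove
  have hMle : ∀ ε : (n : Fin N) → Fin (S n) → Bool,
      |∑ s : (n : Fin N) → Fin (S n),
        γ s * ∏ n, (if ε n (s n) then (1 : ℝ) else -1)| ≤ M :=
    fun ε => le_ciSup hbdd ε
  -- pointwise bound via the cube lemma
  have hXmem : ∀ n s ω, X n s ω ∈ Set.Icc (-1:ℝ) 1 := fun n s ω => hΛ n s (hrange n s ω)
  have hpt : ∀ ω : Ω,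
      |∑ s : (n : Fin N) → Fin (S n), γ s * ∏ n, X n (s n) ω| ≤ M := by
    intro ω
    exact cube_key γ M hMle Finset.univ (fun i => X i.1 i.2 ω)
      (fun i => hXmem i.1 i.2 ω)
      (fun i hi => absurd (Finset.mem_univ i) hi)
  -- integrability
  have hint : ∀ s : (n : Fin N) → Fin (S n),
      Integrable (fun ω => ∏ n, X n (s n) ω) μ := by
    intro s
    have hmeas : Measurable fun ω => ∏ n, X n (s n) ω :=
      Finset.measurable_prod _ fun n _ => hX n (s n)
    refine (integrable_const (1:ℝ)).mono' hmeas.aestronglyMeasurable (ae_of_all _ fun ω => ?_)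
    rw [Real.norm_eq_abs, Finset.abs_prod]
    refine Finset.prod_le_one (fun n _ => abs_nonneg _) fun n _ => ?_
    exact abs_le.mpr ⟨(hXmem n (s n) ω).1, (hXmem n (s n) ω).2⟩
  -- swap sum and integral
  have hswap : (∑ s : (n : Fin N) → Fin (S n), γ s * ∫ ω, ∏ n, X n (s n) ω ∂μ)
      = ∫ ω, ∑ s : (n : Fin N) → Fin (S n), γ s * ∏ n, X n (s n) ω ∂μ := by
    rw [integral_finset_sum _ fun s _ => (hint s).const_mul (γ s)]
    exact Finset.sum_congr rfl fun s _ => (integral_const_mul _ _).symm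
  rw [hswap]
  have := norm_integral_le_of_norm_le_const (μ := μ)
      (f := fun ω => ∑ s : (n : Fin N) → Fin (S n), γ s * ∏ n, X n (s n) ω)
      (C := M) (ae_of_all _ fun ω => by rw [Real.norm_eq_abs]; exact hpt ω)
  simpa [Real.norm_eq_abs, measure_univ] using this
end

section
/- Let (Ω, μ) be a probability space and let f_1, f_2, g_1, g_2 : Ω → ℝ be measurable functions with |f_i(ω)| ≤ 1 and |g_k(ω)| ≤ 1 for all ω ∈ Ω and i, k ∈ {1,2}. Then | ∫_Ω f_1 g_1 dμ + ∫_Ω f_1 g_2 dμ + ∫_Ω f_2 g_1 dμ − ∫_Ω f_2 g_2 dμ | ≤ 2. -/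
open MeasureTheory

lemma bdd_int {Ω : Type*} [MeasurableSpace Ω] (μ : Measure Ω) [IsProbabilityMeasure μ]
    (f g : Ω → ℝ) (hf : Measurable f) (hg : Measurable g)
    (hbf : ∀ ω, |f ω| ≤ 1) (hbg : ∀ ω, |g ω| ≤ 1) :
    Integrable (fun ω => f ω * g ω) μ := by
  refine Integrable.mono' (integrable_const 1) ((hf.mul hg).aestronglyMeasurable) ?_
  filter_upwards with ω
  rw [Real.norm_eq_abs, abs_mul]
  calc |f ω| * |g ω| ≤ 1 * 1 := by
        exact mul_le_mul (hbf ω) (hbg ω) (abs_nonneg _) zero_le_one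
    _ = 1 := by ring

/-- The Clauser-Horne-Shimony-Holt (CHSH) inequality (45), for outcomes in `[-1,1]` of
any spectral type: for measurable `f₁, f₂, g₁, g₂ : Ω → ℝ` bounded by `1` in absolute
value on a probability space `(Ω, μ)`,
`|⟨f₁g₁⟩ + ⟨f₁g₂⟩ + ⟨f₂g₁⟩ − ⟨f₂g₂⟩| ≤ 2`. -/
theorem stmt_8 {Ω : Type*} [MeasurableSpace Ω] (μ : Measure Ω) [IsProbabilityMeasure μ]
    (f₁ f₂ g₁ g₂ : Ω → ℝ)
    (hf₁ : Measurable f₁) (hf₂ : Measurable f₂)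
    (hg₁ : Measurable g₁) (hg₂ : Measurable g₂)
    (hbf₁ : ∀ ω, |f₁ ω| ≤ 1) (hbf₂ : ∀ ω, |f₂ ω| ≤ 1)
    (hbg₁ : ∀ ω, |g₁ ω| ≤ 1) (hbg₂ : ∀ ω, |g₂ ω| ≤ 1) :
    |(∫ ω, f₁ ω * g₁ ω ∂μ) + (∫ ω, f₁ ω * g₂ ω ∂μ) +
      (∫ ω, f₂ ω * g₁ ω ∂μ) - ∫ ω, f₂ ω * g₂ ω ∂μ| ≤ 2 := by
  have h11 := bdd_int μ f₁ g₁ hf₁ hg₁ hbf₁ hbg₁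
  have h12 := bdd_int μ f₁ g₂ hf₁ hg₂ hbf₁ hbg₂
  have h21 := bdd_int μ f₂ g₁ hf₂ hg₁ hbf₂ hbg₁
  have h22 := bdd_int μ f₂ g₂ hf₂ hg₂ hbf₂ hbg₂
  have hsum : (∫ ω, f₁ ω * g₁ ω ∂μ) + (∫ ω, f₁ ω * g₂ ω ∂μ) +
      (∫ ω, f₂ ω * g₁ ω ∂μ) - ∫ ω, f₂ ω * g₂ ω ∂μ
      = ∫ ω, (f₁ ω * g₁ ω + f₁ ω * g₂ ω + f₂ ω * g₁ ω - f₂ ω * g₂ ω) ∂μ := by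
    have hA : Integrable (fun ω => f₁ ω * g₁ ω + f₁ ω * g₂ ω) μ := h11.add h12
    have hB : Integrable (fun ω => f₁ ω * g₁ ω + f₁ ω * g₂ ω + f₂ ω * g₁ ω) μ := hA.add h21
    rw [← integral_add h11 h12, ← integral_add hA h21, ← integral_sub hB h22]
  rw [hsum, ← Real.norm_eq_abs]
  have := norm_integral_le_of_norm_le_const (μ := μ) (C := 2)
    (f := fun ω => f₁ ω * g₁ ω + f₁ ω * g₂ ω + f₂ ω * g₁ ω - f₂ ω * g₂ ω) ?_
  · simpa using this
  · filter_upwards with ω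
    rw [Real.norm_eq_abs]
    have key : f₁ ω * g₁ ω + f₁ ω * g₂ ω + f₂ ω * g₁ ω - f₂ ω * g₂ ω
        = f₁ ω * (g₁ ω + g₂ ω) + f₂ ω * (g₁ ω - g₂ ω) := by ring
    rw [key]
    calc |f₁ ω * (g₁ ω + g₂ ω) + f₂ ω * (g₁ ω - g₂ ω)|
        ≤ |f₁ ω * (g₁ ω + g₂ ω)| + |f₂ ω * (g₁ ω - g₂ ω)| := abs_add_le _ _
      _ ≤ |g₁ ω + g₂ ω| + |g₁ ω - g₂ ω| := add_le_add
            (by rw [abs_mul]; exact mul_le_of_le_one_left (abs_nonneg _) (hbf₁ ω))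
            (by rw [abs_mul]; exact mul_le_of_le_one_left (abs_nonneg _) (hbf₂ ω))
      _ ≤ 2 := by
          rcases abs_cases (g₁ ω + g₂ ω) with ⟨h1, _⟩ | ⟨h1, _⟩ <;>
          rcases abs_cases (g₁ ω - g₂ ω) with ⟨h2, _⟩ | ⟨h2, _⟩ <;>
          rw [h1, h2] <;>
          [skip; skip; skip; skip] <;>
          nlinarith [abs_le.mp (hbg₁ ω), abs_le.mp (hbg₂ ω)]
end

section
/- Let (Ω, μ) be a probability space and let E_1, E_2, F_1, F_2 ⊆ Ω be measurable sets. Then −1 ≤ μ(E_1 ∩ F_1) + μ(E_1 ∩ F_2) + μ(E_2 ∩ F_1) − μ(E_2 ∩ F_2) − μ(E_1) − μ(F_1) ≤ 0. -/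
open MeasureTheory

private lemma ch_pointwise (a b c d : ℝ) (ha : a = 0 ∨ a = 1) (hb : b = 0 ∨ b = 1)
    (hc : c = 0 ∨ c = 1) (hd : d = 0 ∨ d = 1) :
    -1 ≤ a * b + a * d + c * b - c * d - a - b ∧
      a * b + a * d + c * b - c * d - a - b ≤ 0 := by
  rcases ha with rfl | rfl <;> rcases hb with rfl | rfl <;>
    rcases hc with rfl | rfl <;> rcases hd with rfl | rfl <;> norm_num

/-- The Clauser-Horne (CH) inequality (51) on joint probabilities: for measurable sets
`E₁, E₂, F₁, F₂` in a probability space `(Ω, μ)`,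
`−1 ≤ μ(E₁∩F₁) + μ(E₁∩F₂) + μ(E₂∩F₁) − μ(E₂∩F₂) − μ(E₁) − μ(F₁) ≤ 0`. -/
theorem stmt_9 {Ω : Type*} [MeasurableSpace Ω] (μ : Measure Ω) [IsProbabilityMeasure μ]
    (E₁ E₂ F₁ F₂ : Set Ω)
    (hE₁ : MeasurableSet E₁) (hE₂ : MeasurableSet E₂)
    (hF₁ : MeasurableSet F₁) (hF₂ : MeasurableSet F₂) :
    (-1 ≤ (μ (E₁ ∩ F₁)).toReal + (μ (E₁ ∩ F₂)).toReal + (μ (E₂ ∩ F₁)).toReal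
        - (μ (E₂ ∩ F₂)).toReal - (μ E₁).toReal - (μ F₁).toReal) ∧
    ((μ (E₁ ∩ F₁)).toReal + (μ (E₁ ∩ F₂)).toReal + (μ (E₂ ∩ F₁)).toReal
        - (μ (E₂ ∩ F₂)).toReal - (μ E₁).toReal - (μ F₁).toReal ≤ 0) := by
  set f : Set Ω → Ω → ℝ := fun s => s.indicator (fun _ => (1 : ℝ)) with hf
  have hint : ∀ s : Set Ω, MeasurableSet s → Integrable (f s) μ := fun s hs =>
    (integrable_const (1 : ℝ)).indicator hs
  have hval : ∀ s : Set Ω, MeasurableSet s → ∫ x, f s x ∂μ = (μ s).toReal := fun s hs => by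
    simp [hf, integral_indicator hs, Measure.real]
  have h01 : ∀ (s : Set Ω) (x : Ω), f s x = 0 ∨ f s x = 1 := fun s x => by
    by_cases h : x ∈ s <;> simp [hf, Set.indicator_apply, h]
  have hprod : ∀ (s t : Set Ω) (x : Ω), f (s ∩ t) x = f s x * f t x := fun s t x => by
    by_cases hs : x ∈ s <;> by_cases ht : x ∈ t <;>
      simp [hf, Set.indicator_apply, hs, ht]
  set g : Ω → ℝ := fun x => f E₁ x * f F₁ x + f E₁ x * f F₂ x + f E₂ x * f F₁ x
      - f E₂ x * f F₂ x - f E₁ x - f F₁ x with hg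
  have hgint : Integrable g μ := by
    apply Integrable.sub
    apply Integrable.sub
    apply Integrable.sub
    apply Integrable.add
    apply Integrable.add
    · simpa [← hprod] using hint _ (hE₁.inter hF₁)
    · simpa [← hprod] using hint _ (hE₁.inter hF₂)
    · simpa [← hprod] using hint _ (hE₂.inter hF₁)
    · simpa [← hprod] using hint _ (hE₂.inter hF₂)
    · exact hint _ hE₁
    · exact hint _ hF₁
  have hptwise : ∀ x, -1 ≤ g x ∧ g x ≤ 0 := fun x =>
    ch_pointwise _ _ _ _ (h01 E₁ x) (h01 F₁ x) (h01 E₂ x) (h01 F₂ x)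
  have hgval : ∫ x, g x ∂μ = (μ (E₁ ∩ F₁)).toReal + (μ (E₁ ∩ F₂)).toReal
      + (μ (E₂ ∩ F₁)).toReal - (μ (E₂ ∩ F₂)).toReal - (μ E₁).toReal - (μ F₁).toReal := by
    have h11 := hval _ (hE₁.inter hF₁)
    have h12 := hval _ (hE₁.inter hF₂)
    have h21 := hval _ (hE₂.inter hF₁)
    have h22 := hval _ (hE₂.inter hF₂)
    have hA := hval _ hE₁
    have hB := hval _ hF₁
    rw [← h11, ← h12, ← h21, ← h22, ← hA, ← hB]
    have e11 : ∫ x, f (E₁ ∩ F₁) x ∂μ = ∫ x, f E₁ x * f F₁ x ∂μ := by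
      simp [hprod]
    have e12 : ∫ x, f (E₁ ∩ F₂) x ∂μ = ∫ x, f E₁ x * f F₂ x ∂μ := by
      simp [hprod]
    have e21 : ∫ x, f (E₂ ∩ F₁) x ∂μ = ∫ x, f E₂ x * f F₁ x ∂μ := by
      simp [hprod]
    have e22 : ∫ x, f (E₂ ∩ F₂) x ∂μ = ∫ x, f E₂ x * f F₂ x ∂μ := by
      simp [hprod]
    rw [e11, e12, e21, e22]
    have i11 : Integrable (fun x => f E₁ x * f F₁ x) μ := by
      simpa [← hprod] using hint _ (hE₁.inter hF₁)
    have i12 : Integrable (fun x => f E₁ x * f F₂ x) μ := by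
      simpa [← hprod] using hint _ (hE₁.inter hF₂)
    have i21 : Integrable (fun x => f E₂ x * f F₁ x) μ := by
      simpa [← hprod] using hint _ (hE₂.inter hF₁)
    have i22 : Integrable (fun x => f E₂ x * f F₂ x) μ := by
      simpa [← hprod] using hint _ (hE₂.inter hF₂)
    have iA : Integrable (fun x => f E₁ x * f F₁ x + f E₁ x * f F₂ x) μ := i11.add i12
    have iB : Integrable (fun x => f E₁ x * f F₁ x + f E₁ x * f F₂ x + f E₂ x * f F₁ x) μ :=
      iA.add i21
    have iC : Integrable (fun x => f E₁ x * f F₁ x + f E₁ x * f F₂ x + f E₂ x * f F₁ x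
        - f E₂ x * f F₂ x) μ := iB.sub i22
    have iD : Integrable (fun x => f E₁ x * f F₁ x + f E₁ x * f F₂ x + f E₂ x * f F₁ x
        - f E₂ x * f F₂ x - f E₁ x) μ := iC.sub (hint _ hE₁)
    rw [hg]
    rw [integral_sub iD (hint _ hF₁), integral_sub iC (hint _ hE₁),
        integral_sub iB i22, integral_add iA i21, integral_add i11 i12]
  constructor
  · rw [← hgval]
    calc (-1 : ℝ) = ∫ _x, (-1 : ℝ) ∂μ := by simp
      _ ≤ ∫ x, g x ∂μ := integral_mono (integrable_const _) hgint fun x => (hptwise x).1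
  · rw [← hgval]
    calc ∫ x, g x ∂μ ≤ ∫ _x, (0 : ℝ) ∂μ :=
        integral_mono hgint (integrable_const _) fun x => (hptwise x).2
      _ = 0 := by simp
end

section
/- For N ≥ 2 define real coefficients γ_{(s_1,…,s_N)}, s_n ∈ {1,2}, by the recursion γ_{(1,1)} = γ_{(1,2)} = γ_{(2,1)} = 1, γ_{(2,2)} = −1, and γ_{(s_1,…,s_{n-1},s_n)} = γ_{(s_1,…,s_{n-1})} + (δ_{s_n,1} − δ_{s_n,2}) γ_{(s̄_1,…,s̄_{n-1})} for 3 ≤ n ≤ N, where s̄ denotes the flip 1 ↔ 2. Then the maximum over vectors η_1,…,η_N ∈ {-1,1}^2 of | ∑_{s_1,…,s_N ∈ {1,2}} γ_{(s_1,…,s_N)} η_1^{(s_1)} ⋯ η_N^{(s_N)} | equals 2^{N−1}. -/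
/-- The flip `1 ↔ 2` of a setting label (settings are `0`-indexed: `0` stands for the
first setting and `1` for the second). -/
def flipSetting (s : Fin 2) : Fin 2 := if s = 0 then 1 else 0

/-- The Mermin-Klyshko coefficients `γ_{(s₁,…,s_N)}` for `N = m + 2` parties, settings
`0`-indexed: base case is the CHSH matrix `γ_{(1,1)} = γ_{(1,2)} = γ_{(2,1)} = 1`,
`γ_{(2,2)} = −1`; recursion
`γ_{(s₁,…,s_{n-1},s_n)} = γ_{(s₁,…,s_{n-1})} + (δ_{s_n,1} − δ_{s_n,2}) γ_{(s̄₁,…,s̄_{n-1})}`. -/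
noncomputable def MKcoeff : (m : ℕ) → (Fin (m + 2) → Fin 2) → ℝ
  | 0, s => if s 0 = 1 ∧ s 1 = 1 then -1 else 1
  | m + 1, s =>
      MKcoeff m (fun i => s i.castSucc) +
        (if s (Fin.last (m + 2)) = 0 then 1 else -1) *
          MKcoeff m (fun i => flipSetting (s i.castSucc))


lemma flip_invol : Function.Involutive flipSetting := by
  intro s; fin_cases s <;> rfl

def flipPerm : Equiv.Perm (Fin 2) := flip_invol.toPerm

lemma MK_split (m : ℕ) (η : Fin (m + 3) → Fin 2 → ℝ) :
    ∑ s : Fin (m + 3) → Fin 2, MKcoeff (m+1) s * ∏ i, η i (s i)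
    = (η (Fin.last (m+2)) 0 + η (Fin.last (m+2)) 1) *
        (∑ s : Fin (m + 2) → Fin 2, MKcoeff m s * ∏ i, η i.castSucc (s i))
      + (η (Fin.last (m+2)) 0 - η (Fin.last (m+2)) 1) *
        (∑ s : Fin (m + 2) → Fin 2, MKcoeff m s * ∏ i, η i.castSucc (flipSetting (s i))) := by
  rw [← Fintype.sum_equiv (Fin.snocEquiv (fun _ => Fin 2))
      (fun p => MKcoeff (m+1) ((Fin.snoc p.2 p.1 : Fin (m+3) → Fin 2)) *
        ∏ i, η i ((Fin.snoc p.2 p.1 : Fin (m+3) → Fin 2) i))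
      (fun s => MKcoeff (m+1) s * ∏ i, η i (s i)) (by intro p; rfl)]
  rw [Fintype.sum_prod_type]
  have key : ∀ t : Fin 2, ∀ f : Fin (m+2) → Fin 2,
      MKcoeff (m+1) ((Fin.snoc f t : Fin (m+3) → Fin 2)) *
        ∏ i, η i ((Fin.snoc f t : Fin (m+3) → Fin 2) i)
      = (MKcoeff m f + (if t = 0 then 1 else -1) * MKcoeff m (fun i => flipSetting (f i)))
        * ((∏ i, η i.castSucc (f i)) * η (Fin.last (m+2)) t) := by
    intro t f
    rw [Fin.prod_univ_castSucc]
    simp [MKcoeff, Fin.snoc_castSucc, Fin.snoc_last]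
  simp only [key]
  rw [Fin.sum_univ_two]
  have e0 : (if (0 : Fin 2) = 0 then (1:ℝ) else -1) = 1 := rfl
  have e1 : (if (1 : Fin 2) = 0 then (1:ℝ) else -1) = -1 := rfl
  simp only [e0, e1, if_true, one_mul, neg_one_mul]
  have hB : (∑ s : Fin (m+2) → Fin 2,
        MKcoeff m (fun i => flipSetting (s i)) * ∏ i, η i.castSucc (s i))
      = ∑ s : Fin (m+2) → Fin 2, MKcoeff m s * ∏ i, η i.castSucc (flipSetting (s i)) := by
    apply Fintype.sum_equiv (Equiv.piCongrRight (fun _ => flipPerm))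
    intro s
    have hP : ∀ x : Fin 2, flipPerm x = flipSetting x := fun _ => rfl
    have hff : ∀ x : Fin 2, flipSetting (flipSetting x) = x := flip_invol
    simp only [Equiv.piCongrRight_apply, Pi.map_apply, hP, hff]
    rfl
  rw [show (∑ s : Fin (m+2) → Fin 2,
      (MKcoeff m s + MKcoeff m fun i => flipSetting (s i)) *
        ((∏ i, η i.castSucc (s i)) * η (Fin.last (m+2)) 0))
    = (∑ s : Fin (m+2) → Fin 2, MKcoeff m s * ∏ i, η i.castSucc (s i)) * η (Fin.last (m+2)) 0
      + (∑ s : Fin (m+2) → Fin 2, MKcoeff m (fun i => flipSetting (s i)) * ∏ i, η i.castSucc (s i))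
          * η (Fin.last (m+2)) 0 from by
      rw [Finset.sum_mul, Finset.sum_mul, ← Finset.sum_add_distrib]
      exact Finset.sum_congr rfl fun s _ => by ring]
  rw [show (∑ s : Fin (m+2) → Fin 2,
      (MKcoeff m s + -(MKcoeff m fun i => flipSetting (s i))) *
        ((∏ i, η i.castSucc (s i)) * η (Fin.last (m+2)) 1))
    = (∑ s : Fin (m+2) → Fin 2, MKcoeff m s * ∏ i, η i.castSucc (s i)) * η (Fin.last (m+2)) 1
      - (∑ s : Fin (m+2) → Fin 2, MKcoeff m (fun i => flipSetting (s i)) * ∏ i, η i.castSucc (s i))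
          * η (Fin.last (m+2)) 1 from by
      rw [Finset.sum_mul, Finset.sum_mul, ← Finset.sum_sub_distrib]
      exact Finset.sum_congr rfl fun s _ => by ring]
  rw [hB]; ring

lemma MK_base_eq (η : Fin 2 → Fin 2 → ℝ) :
    ∑ s : Fin 2 → Fin 2, MKcoeff 0 s * ∏ i, η i (s i)
    = η 0 0 * η 1 0 + η 0 0 * η 1 1 + η 0 1 * η 1 0 - η 0 1 * η 1 1 := by
  rw [← Equiv.sum_comp (piFinTwoEquiv fun _ => Fin 2).symm
    (fun s => MKcoeff 0 s * ∏ i, η i (s i))]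
  rw [Fintype.sum_prod_type]
  simp [Fin.sum_univ_two, Fin.prod_univ_two, MKcoeff]
  ring

lemma MK_bound : ∀ m : ℕ, ∀ η : Fin (m+2) → Fin 2 → ℝ,
    (∀ i t, η i t = -1 ∨ η i t = 1) →
    |∑ s : Fin (m+2) → Fin 2, MKcoeff m s * ∏ i, η i (s i)| ≤ 2^(m+1) := by
  intro m
  induction m with
  | zero =>
    intro η h
    rw [MK_base_eq, pow_one]
    rcases h 0 0 with h00|h00 <;> rcases h 0 1 with h01|h01 <;>
      rcases h 1 0 with h10|h10 <;> rcases h 1 1 with h11|h11 <;>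
      rw [h00, h01, h10, h11] <;> norm_num
  | succ m ih =>
    intro η h
    show |∑ s : Fin (m+3) → Fin 2, MKcoeff (m+1) s * ∏ i, η i (s i)| ≤ 2^(m+2)
    rw [MK_split]
    set a := η (Fin.last (m+2)) 0 with ha
    set b := η (Fin.last (m+2)) 1 with hb
    set A := ∑ s : Fin (m+2) → Fin 2, MKcoeff m s * ∏ i, η i.castSucc (s i) with hA
    set B := ∑ s : Fin (m+2) → Fin 2, MKcoeff m s * ∏ i, η i.castSucc (flipSetting (s i)) with hB
    have bA : |A| ≤ 2^(m+1) := ih (fun i => η i.castSucc) (fun i t => h i.castSucc t)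
    have bB : |B| ≤ 2^(m+1) :=
      ih (fun i t => η i.castSucc (flipSetting t)) (fun i t => h i.castSucc (flipSetting t))
    have habs : |a + b| + |a - b| = 2 := by
      rcases h (Fin.last (m+2)) 0 with h0|h0 <;> rcases h (Fin.last (m+2)) 1 with h1|h1 <;>
        rw [← ha] at h0 <;> rw [← hb] at h1 <;> rw [h0, h1] <;> norm_num
    calc |(a + b) * A + (a - b) * B| ≤ |(a + b) * A| + |(a - b) * B| := abs_add_le _ _
      _ = |a + b| * |A| + |a - b| * |B| := by rw [abs_mul, abs_mul]
      _ ≤ |a + b| * 2^(m+1) + |a - b| * 2^(m+1) :=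
          add_le_add (mul_le_mul_of_nonneg_left bA (abs_nonneg _))
            (mul_le_mul_of_nonneg_left bB (abs_nonneg _))
      _ = (|a + b| + |a - b|) * 2^(m+1) := by ring
      _ = 2 * 2^(m+1) := by rw [habs]
      _ = 2^(m+2) := by rw [pow_succ]; ring

lemma MK_attain : ∀ m : ℕ, ∃ η : Fin (m+2) → Fin 2 → ℝ,
    (∀ i t, η i t = -1 ∨ η i t = 1) ∧
    (∑ s : Fin (m+2) → Fin 2, MKcoeff m s * ∏ i, η i (s i)) = 2^(m+1) := by
  intro m
  induction m with
  | zero =>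
    refine ⟨fun _ _ => 1, fun _ _ => Or.inr rfl, ?_⟩
    show ∑ s : Fin 2 → Fin 2, MKcoeff 0 s * ∏ i, (fun (_ : Fin 2) (_ : Fin 2) => (1:ℝ)) i (s i) = 2 ^ 1
    exact (MK_base_eq fun _ _ => 1).trans (by norm_num)
  | succ m ih =>
    obtain ⟨η', h', hsum⟩ := ih
    refine ⟨Fin.snoc η' (fun _ => (1:ℝ)), ?_, ?_⟩
    · intro i t
      refine Fin.lastCases ?_ ?_ i
      · refine Or.inr ?_; rw [Fin.snoc_last]
      · intro j; simp only [Fin.snoc_castSucc]; exact h' j t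
    · show (∑ s : Fin (m+3) → Fin 2,
          MKcoeff (m+1) s * ∏ i, (Fin.snoc η' (fun _ => (1:ℝ)) : Fin (m+3) → Fin 2 → ℝ) i (s i))
          = 2^(m+2)
      rw [MK_split]
      simp only [Fin.snoc_last, Fin.snoc_castSucc]
      rw [hsum, pow_succ]; ring

/-- Relation (57): the maximum over vertices `η₁, …, η_N ∈ {-1,1}²` of the absolute value
of the Mermin-Klyshko `N`-linear form equals `2^{N−1}` (here `N = m + 2 ≥ 2`). -/
theorem stmt_10 (m : ℕ) :
    IsGreatest {x : ℝ | ∃ η : Fin (m + 2) → Fin 2 → ℝ,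
        (∀ i t, η i t = -1 ∨ η i t = 1) ∧
        x = |∑ s : Fin (m + 2) → Fin 2, MKcoeff m s * ∏ i, η i (s i)|}
      (2 ^ (m + 1)) := by
  constructor
  · obtain ⟨η, hη, hsum⟩ := MK_attain m
    exact ⟨η, hη, by rw [hsum, abs_of_pos (by positivity)]⟩
  · rintro x ⟨η, hη, rfl⟩
    exact MK_bound m η hη
end

section
/- Let (Ω, μ) be a probability space, N ≥ 1, and for each site n ∈ {1,…,N}, each setting s_n ∈ {1,…,S_n}, and each index q_n ∈ {1,…,Q_n}, let E_n^{(s_n,q_n)} ⊆ Ω be a measurable set such that for each fixed n and s_n the sets E_n^{(s_n,1)},…,E_n^{(s_n,Q_n)} are pairwise disjoint. For each n let Ξ_n = {η ∈ {0,1}^{S_n Q_n} : ∑_{q=1}^{Q_n} η^{(s,q)} ≤ 1 for every s = 1,…,S_n}. Then for any real coefficients γ_{(s_{n_1},…,s_{n_M})}^{(q_{n_1},…,q_{n_M})} indexed by nonempty subsets {n_1 < ⋯ < n_M} ⊆ {1,…,N}, settings, and q-indices: min over (η_1,…,η_N) ∈ Ξ_1 × ⋯ × Ξ_N of ∑_{M,\,n_1<⋯<n_M}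 ∑ γ_{(s_{n_1},…,s_{n_M})}^{(q_{n_1},…,q_{n_M})} η_{n_1}^{(s_{n_1},q_{n_1})} ⋯ η_{n_M}^{(s_{n_M},q_{n_M})} ≤ ∑_{M,\,n_1<⋯<n_M} ∑ γ_{(s_{n_1},…,s_{n_M})}^{(q_{n_1},…,q_{n_M})} μ(E_{n_1}^{(s_{n_1},q_{n_1})} ∩ ⋯ ∩ E_{n_M}^{(s_{n_M},q_{n_M})}) ≤ max over (η_1,…,η_N) ∈ Ξ_1 × ⋯ × Ξ_N of the same multilinear expression. -/
open MeasureTheory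

private lemma prod_indicator_aux {Ω : Type*} {ι : Type*} [Fintype ι] (A : ι → Set Ω) (ω : Ω) :
    ∏ i, (A i).indicator (1 : Ω → ℝ) ω = (⋂ i, A i).indicator (1 : Ω → ℝ) ω := by
  by_cases h : ω ∈ ⋂ i, A i
  · rw [Set.indicator_of_mem h, Pi.one_apply]
    exact Finset.prod_eq_one fun i _ => by
      rw [Set.indicator_of_mem (Set.mem_iInter.mp h i), Pi.one_apply]
  · rw [Set.indicator_of_notMem h]
    have : ∃ i, ω ∉ A i := by simpa [Set.mem_iInter] using h
    obtain ⟨i, hi⟩ := this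
    exact Finset.prod_eq_zero (Finset.mem_univ i) (Set.indicator_of_notMem hi _)

/-- Corollary 3 (inequality (34)): the tight linear LHV constraint on joint probabilities
of product events. The hidden-variable events `E n s q ⊆ Ω` are pairwise disjoint in `q`
for each fixed site `n` and setting `s`, and the extrema run over the sets
`Ξ n` of admissible `{0,1}`-valued vectors with at most one `1` per setting. -/
theorem stmt_12 {Ω : Type*} [MeasurableSpace Ω] (μ : Measure Ω) [IsProbabilityMeasure μ]
    (N : ℕ) (hN : 1 ≤ N) (S Q : Fin N → ℕ)
    (E : (n : Fin N) → Fin (S n) → Fin (Q n) → Set Ω)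
    (hE : ∀ n s q, MeasurableSet (E n s q))
    (hdisj : ∀ n s, ∀ q q' : Fin (Q n), q ≠ q' → E n s q ∩ E n s q' = ∅)
    (γ : (T : Finset (Fin N)) →
      ((n : T) → Fin (S n.1)) → ((n : T) → Fin (Q n.1)) → ℝ) :
    let Ξ : (n : Fin N) → Set (Fin (S n) → Fin (Q n) → ℝ) := fun n =>
      {η | (∀ s q, η s q = 0 ∨ η s q = 1) ∧ ∀ s, (∑ q, η s q) ≤ 1}
    let G : ((n : Fin N) → Fin (S n) → Fin (Q n) → ℝ) → ℝ := fun η =>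
      ∑ T ∈ Finset.univ.powerset.filter (fun T : Finset (Fin N) => T.Nonempty),
        ∑ s : (n : T) → Fin (S n.1), ∑ q : (n : T) → Fin (Q n.1),
          γ T s q * ∏ n : T, η n.1 (s n) (q n)
    (sInf (G '' {η | ∀ n, η n ∈ Ξ n}) ≤
      ∑ T ∈ Finset.univ.powerset.filter (fun T : Finset (Fin N) => T.Nonempty),
        ∑ s : (n : T) → Fin (S n.1), ∑ q : (n : T) → Fin (Q n.1),
          γ T s q * (μ (⋂ n : T, E n.1 (s n) (q n))).toReal) ∧
    ((∑ T ∈ Finset.univ.powerset.filter (fun T : Finset (Fin N) => T.Nonempty),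
        ∑ s : (n : T) → Fin (S n.1), ∑ q : (n : T) → Fin (Q n.1),
          γ T s q * (μ (⋂ n : T, E n.1 (s n) (q n))).toReal) ≤
      sSup (G '' {η | ∀ n, η n ∈ Ξ n})) := by
  intro Ξ G
  classical
  set M : Set ((n : Fin N) → Fin (S n) → Fin (Q n) → ℝ) := {η | ∀ n, η n ∈ Ξ n} with hMdef
  -- finiteness of M
  have hΞfin : ∀ n, (Ξ n).Finite := by
    intro n
    have hsub : Ξ n ⊆ Set.univ.pi (fun _ : Fin (S n) =>
        Set.univ.pi (fun _ : Fin (Q n) => ({0, 1} : Set ℝ))) := by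
      intro η hη s _ q _
      rcases hη.1 s q with h | h <;> simp [h]
    exact Set.Finite.subset
      (Set.Finite.pi fun s => Set.Finite.pi fun q =>
        (Set.finite_singleton (1 : ℝ)).insert 0) hsub
  have hMfin : M.Finite := by
    refine Set.Finite.subset (Set.Finite.pi hΞfin) ?_
    intro η hη n _
    exact hη n
  -- the hidden variable assignment
  set f : Ω → ((n : Fin N) → Fin (S n) → Fin (Q n) → ℝ) :=
    fun ω n s q => (E n s q).indicator (1 : Ω → ℝ) ω with hfdef
  have hfM : ∀ ω, f ω ∈ M := by
    intro ω n
    constructor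
    · intro s q
      by_cases h : ω ∈ E n s q
      · right; simp [hfdef, Set.indicator_of_mem h]
      · left; simp [hfdef, Set.indicator_of_notMem h]
    · intro s
      by_cases hx : ∃ q, ω ∈ E n s q
      · obtain ⟨q0, hq0⟩ := hx
        have : ∑ q, f ω n s q = 1 := by
          rw [Finset.sum_eq_single q0]
          · simp [hfdef, Set.indicator_of_mem hq0]
          · intro b _ hb
            have hnb : ω ∉ E n s b := by
              intro hmem
              have := hdisj n s b q0 hb
              exact absurd (Set.mem_inter hmem hq0) (by simp [this])
            simp [hfdef, Set.indicator_of_notMem hnb]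
          · intro h; exact absurd (Finset.mem_univ q0) h
        rw [this]
      · have : ∀ q : Fin (Q n), f ω n s q = 0 := by
          intro q
          have : ω ∉ E n s q := fun h => hx ⟨q, h⟩
          simp [hfdef, Set.indicator_of_notMem this]
        simp [this]
  -- measurability of intersections
  have measI : ∀ (T : Finset (Fin N)) (s : (n : T) → Fin (S n.1)) (q : (n : T) → Fin (Q n.1)),
      MeasurableSet (⋂ n : T, E n.1 (s n) (q n)) :=
    fun T s q => MeasurableSet.iInter (fun n => hE n.1 (s n) (q n))
  -- pointwise: G (f ω) as sum of indicators of intersections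
  have hGf : ∀ ω, G (f ω) =
      ∑ T ∈ Finset.univ.powerset.filter (fun T : Finset (Fin N) => T.Nonempty),
        ∑ s : (n : T) → Fin (S n.1), ∑ q : (n : T) → Fin (Q n.1),
          γ T s q * (⋂ n : T, E n.1 (s n) (q n)).indicator (1 : Ω → ℝ) ω := by
    intro ω
    refine Finset.sum_congr rfl fun T _ => Finset.sum_congr rfl fun s _ =>
      Finset.sum_congr rfl fun q _ => ?_
    rw [prod_indicator_aux]
  -- integrability of each term
  have hg : ∀ (T : Finset (Fin N)) (s : (n : T) → Fin (S n.1)) (q : (n : T) → Fin (Q n.1)),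
      Integrable (fun ω => γ T s q * (⋂ n : T, E n.1 (s n) (q n)).indicator (1 : Ω → ℝ) ω) μ :=
    fun T s q => ((integrable_const (1 : ℝ)).indicator (measI T s q)).const_mul _
  have hIntGf : Integrable (fun ω => G (f ω)) μ := by
    have : (fun ω => G (f ω)) = fun ω =>
        ∑ T ∈ Finset.univ.powerset.filter (fun T : Finset (Fin N) => T.Nonempty),
          ∑ s : (n : T) → Fin (S n.1), ∑ q : (n : T) → Fin (Q n.1),
            γ T s q * (⋂ n : T, E n.1 (s n) (q n)).indicator (1 : Ω → ℝ) ω :=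
      funext hGf
    rw [this]
    exact integrable_finset_sum _ fun T _ => integrable_finset_sum _ fun s _ =>
      integrable_finset_sum _ fun q _ => hg T s q
  -- the middle quantity equals the integral of G ∘ f
  have key : (∑ T ∈ Finset.univ.powerset.filter (fun T : Finset (Fin N) => T.Nonempty),
        ∑ s : (n : T) → Fin (S n.1), ∑ q : (n : T) → Fin (Q n.1),
          γ T s q * (μ (⋂ n : T, E n.1 (s n) (q n))).toReal) = ∫ ω, G (f ω) ∂μ := by
    rw [integral_congr_ae (Filter.EventuallyEq.of_eq (funext hGf))]
    rw [integral_finset_sum _ fun T _ => integrable_finset_sum _ fun s _ =>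
      integrable_finset_sum _ fun q _ => hg T s q]
    refine Finset.sum_congr rfl fun T _ => ?_
    rw [integral_finset_sum _ fun s _ => integrable_finset_sum _ fun q _ => hg T s q]
    refine Finset.sum_congr rfl fun s _ => ?_
    rw [integral_finset_sum _ fun q _ => hg T s q]
    refine Finset.sum_congr rfl fun q _ => ?_
    rw [integral_const_mul, integral_indicator_one (measI T s q)]
    rfl
  -- G (f ω) lies in the finite nonempty image
  have hmem : ∀ ω, G (f ω) ∈ G '' M := fun ω => ⟨f ω, hfM ω, rfl⟩
  have hfinIm : (G '' M).Finite := hMfin.image G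
  have hbdd_below : BddBelow (G '' M) := hfinIm.bddBelow
  have hbdd_above : BddAbove (G '' M) := hfinIm.bddAbove
  constructor
  · rw [key]
    calc sInf (G '' M) = ∫ _, sInf (G '' M) ∂μ := by simp
      _ ≤ ∫ ω, G (f ω) ∂μ :=
        integral_mono (integrable_const _) hIntGf fun ω => csInf_le hbdd_below (hmem ω)
  · rw [key]
    calc ∫ ω, G (f ω) ∂μ ≤ ∫ _, sSup (G '' M) ∂μ :=
        integral_mono hIntGf (integrable_const _) fun ω => le_csSup hbdd_above (hmem ω)
      _ = sSup (G '' M) := by simp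
end

section
/- Let (Ω, μ) be a probability space, N ≥ 1, and for each site n ∈ {1,…,N} and setting s ∈ {1,…,S_n} let Λ_n^{(s)} be a measurable space and X_n^{(s)} : Ω → Λ_n^{(s)} a measurable map. For every setting tuple s = (s_1,…,s_N) and every q ∈ {1,…,Q_s}, let D_s^{(q)} ⊆ Λ_1^{(s_1)} × ⋯ × Λ_N^{(s_N)} be a measurable set. Then for any real coefficients γ_s^{(q)}: inf over all families λ = (λ_n^{(t)})_{n,t} with λ_n^{(t)} ∈ Λ_n^{(t)} of ∑_{s,q} γ_s^{(q)} χ_{D_s^{(q)}}(λ_1^{(s_1)},…,λ_N^{(s_N)}) ≤ ∑_{s,q} γ_s^{(q)} μ({ω : (X_1^{(s_1)}(ω),…,X_N^{(s_N)}(ω)) ∈ D_s^{(q)}}) ≤ sup over all such families λ of ∑_{s,q} γ_s^{(q)} χ_{D_s^{(q)}}(λ_1^{(s_1)},…,λ_N^{(s_N)}). -/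
open MeasureTheory

set_option maxHeartbeats 800000 in
/-- Corollary 4 (inequality (40)): the tight linear LHV constraint on joint probabilities
of arbitrary events `D s q ⊆ Λ₁^{(s₁)} × ⋯ × Λ_N^{(s_N)}`, not necessarily of the product
form; `Set.indicator (D s q) 1` is the indicator function `χ_{D_s^{(q)}}`. -/
theorem stmt_13 {Ω : Type*} [MeasurableSpace Ω] (μ : Measure Ω) [IsProbabilityMeasure μ]
    (N : ℕ) (hN : 1 ≤ N) (S : Fin N → ℕ) (hS : ∀ n, 1 ≤ S n)
    (Λ : (n : Fin N) → Fin (S n) → Type*)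
    [∀ n s, MeasurableSpace (Λ n s)]
    (X : (n : Fin N) → (s : Fin (S n)) → Ω → Λ n s)
    (hX : ∀ n s, Measurable (X n s))
    (Q : ((n : Fin N) → Fin (S n)) → ℕ)
    (D : (s : (n : Fin N) → Fin (S n)) → Fin (Q s) → Set ((n : Fin N) → Λ n (s n)))
    (hD : ∀ s q, MeasurableSet (D s q))
    (γ : (s : (n : Fin N) → Fin (S n)) → Fin (Q s) → ℝ) :
    ((⨅ lam : (n : Fin N) → (t : Fin (S n)) → Λ n t,
        ∑ s : (n : Fin N) → Fin (S n), ∑ q : Fin (Q s),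
          γ s q * Set.indicator (D s q) (fun _ => (1 : ℝ)) (fun n => lam n (s n))) ≤
      ∑ s : (n : Fin N) → Fin (S n), ∑ q : Fin (Q s),
        γ s q * (μ {ω | (fun n => X n (s n) ω) ∈ D s q}).toReal) ∧
    ((∑ s : (n : Fin N) → Fin (S n), ∑ q : Fin (Q s),
        γ s q * (μ {ω | (fun n => X n (s n) ω) ∈ D s q}).toReal) ≤
      ⨆ lam : (n : Fin N) → (t : Fin (S n)) → Λ n t,
        ∑ s : (n : Fin N) → Fin (S n), ∑ q : Fin (Q s),
          γ s q * Set.indicator (D s q) (fun _ => (1 : ℝ)) (fun n => lam n (s n))) := by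
  classical
  have hΩ : Nonempty Ω := by
    by_contra h
    rw [not_nonempty_iff] at h
    have : μ Set.univ = 0 := by simp [Set.univ_eq_empty_iff.2 h]
    simp [measure_univ] at this
  set g : ((n : Fin N) → (t : Fin (S n)) → Λ n t) → ℝ := fun lam =>
    ∑ s : (n : Fin N) → Fin (S n), ∑ q : Fin (Q s),
      γ s q * Set.indicator (D s q) (fun _ => (1 : ℝ)) (fun n => lam n (s n)) with hg
  clear_value g
  haveI : Nonempty ((n : Fin N) → (t : Fin (S n)) → Λ n t) := by
    obtain ⟨ω⟩ := hΩ
    exact ⟨fun n t => X n t ω⟩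
  -- bound for g
  have hgbd : ∀ lam, |g lam| ≤ ∑ s : (n : Fin N) → Fin (S n), ∑ q : Fin (Q s), |γ s q| := by
    intro lam
    simp only [hg]
    refine (Finset.abs_sum_le_sum_abs _ _).trans (Finset.sum_le_sum fun s _ => ?_)
    refine (Finset.abs_sum_le_sum_abs _ _).trans (Finset.sum_le_sum fun q _ => ?_)
    rw [abs_mul]
    have : |Set.indicator (D s q) (fun _ => (1 : ℝ)) (fun n => lam n (s n))| ≤ 1 := by
      by_cases h : (fun n => lam n (s n)) ∈ D s q <;> simp [Set.indicator_of_mem, Set.indicator_of_notMem, h]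
    calc |γ s q| * |_| ≤ |γ s q| * 1 := mul_le_mul_of_nonneg_left this (abs_nonneg _)
      _ = |γ s q| := mul_one _
  have hbdd_below : BddBelow (Set.range g) := by
    refine ⟨-(∑ s : (n : Fin N) → Fin (S n), ∑ q : Fin (Q s), |γ s q|), ?_⟩
    rintro _ ⟨lam, rfl⟩
    linarith [abs_le.1 (hgbd lam)]
  have hbdd_above : BddAbove (Set.range g) := by
    refine ⟨∑ s : (n : Fin N) → Fin (S n), ∑ q : Fin (Q s), |γ s q|, ?_⟩
    rintro _ ⟨lam, rfl⟩
    linarith [abs_le.1 (hgbd lam)]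
  -- measurability of Y s
  have hY : ∀ s : (n : Fin N) → Fin (S n), Measurable (fun ω n => X n (s n) ω) :=
    fun s => measurable_pi_lambda _ fun n => hX n (s n)
  -- each term integrable
  have hint : ∀ (s : (n : Fin N) → Fin (S n)) (q : Fin (Q s)),
      Integrable (fun ω => γ s q * Set.indicator (D s q) (fun _ => (1 : ℝ)) (fun n => X n (s n) ω)) μ := by
    intro s q
    have h1 : (fun ω => Set.indicator (D s q) (fun _ => (1 : ℝ)) (fun n => X n (s n) ω))
        = Set.indicator ((fun ω n => X n (s n) ω) ⁻¹' D s q) (fun _ => (1 : ℝ)) := by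
      ext ω
      by_cases h : (fun n => X n (s n) ω) ∈ D s q <;>
        simp [Set.indicator, h, Set.mem_preimage]
    have h2 : Integrable (fun ω => Set.indicator (D s q) (fun _ => (1 : ℝ)) (fun n => X n (s n) ω)) μ := by
      rw [h1]
      exact (integrable_const (1 : ℝ)).indicator ((hY s) (hD s q))
    exact h2.const_mul _
  -- integral of g ∘ X equals the middle sum
  have hintg : Integrable (fun ω => g (fun n t => X n t ω)) μ := by
    simp only [hg]
    exact integrable_finset_sum _ fun s _ => integrable_finset_sum _ fun q _ => hint s q
  have hmid : (∫ ω, g (fun n t => X n t ω) ∂μ) =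
      ∑ s : (n : Fin N) → Fin (S n), ∑ q : Fin (Q s),
        γ s q * (μ {ω | (fun n => X n (s n) ω) ∈ D s q}).toReal := by
    simp only [hg]
    rw [integral_finset_sum _ fun s _ => integrable_finset_sum _ fun q _ => hint s q]
    refine Finset.sum_congr rfl fun s _ => ?_
    rw [integral_finset_sum _ fun q _ => hint s q]
    refine Finset.sum_congr rfl fun q _ => ?_
    rw [integral_const_mul]
    congr 1
    have h1 : (fun ω => Set.indicator (D s q) (fun _ => (1 : ℝ)) (fun n => X n (s n) ω))
        = Set.indicator ((fun ω n => X n (s n) ω) ⁻¹' D s q) (fun _ => (1 : ℝ)) := by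
      ext ω
      by_cases h : (fun n => X n (s n) ω) ∈ D s q <;>
        simp [Set.indicator, h, Set.mem_preimage]
    rw [h1, integral_indicator_const (1 : ℝ) ((hY s) (hD s q))]
    simp [Set.preimage, measureReal_def]
  constructor
  · rw [← hmid]
    have h1 : (∫ _ω : Ω, iInf g ∂μ) = iInf g := by
      rw [integral_const, measureReal_def, measure_univ, ENNReal.toReal_one, one_smul]
    have h2 : ∀ ω : Ω, iInf g ≤ g (fun n t => X n t ω) :=
      fun ω => ciInf_le hbdd_below _
    calc iInf g = ∫ _ω : Ω, iInf g ∂μ := h1.symm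
      _ ≤ ∫ ω, g (fun n t => X n t ω) ∂μ := integral_mono (integrable_const _) hintg h2
  · rw [← hmid]
    have h1 : (∫ _ω : Ω, iSup g ∂μ) = iSup g := by
      rw [integral_const, measureReal_def, measure_univ, ENNReal.toReal_one, one_smul]
    have h2 : ∀ ω : Ω, g (fun n t => X n t ω) ≤ iSup g :=
      fun ω => le_ciSup hbdd_above _
    calc (∫ ω, g (fun n t => X n t ω) ∂μ) ≤ ∫ _ω : Ω, iSup g ∂μ := integral_mono hintg (integrable_const _) h2
      _ = iSup g := h1
end

section
/- Let (Ω, μ) be a probability space and let E_1, E_2, E_3, E_4 ⊆ Ω and F_1, F_2, F_3, F_4 ⊆ Ω be measurable sets. Let γ be the 4 × 4 matrix with entries γ_{ik} given by rows (1,1,1,1), (1,1,1,−1), (1,1,−1,0), (1,−1,0,0). Then ∑_{i,k=1}^{4} γ_{ik} μ(E_i ∩ F_k) − μ(E_1) − 3 μ(F_1) − 2 μ(F_2) − μ(F_3) ≤ 0. -/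
open MeasureTheory

section Aux

variable {Ω : Type*} [MeasurableSpace Ω] (μ : Measure Ω) [IsProbabilityMeasure μ]

private lemma ind_int (s : Set Ω) (hs : MeasurableSet s) :
    Integrable (s.indicator (fun _ => (1 : ℝ))) μ :=
  (integrable_indicator_iff hs).2 (integrableOn_const (measure_ne_top μ s))

omit [IsProbabilityMeasure μ] in
private lemma ind_eq (s : Set Ω) (hs : MeasurableSet s) :
    (μ s).toReal = ∫ ω, s.indicator (fun _ => (1 : ℝ)) ω ∂μ := by
  rw [integral_indicator_const _ hs, smul_eq_mul, mul_one]
  rfl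

omit [MeasurableSpace Ω] [IsProbabilityMeasure μ] in
private lemma ind_inter (s t : Set Ω) (ω : Ω) :
    (s ∩ t).indicator (fun _ => (1 : ℝ)) ω
      = s.indicator (fun _ => (1 : ℝ)) ω * t.indicator (fun _ => (1 : ℝ)) ω := by
  by_cases hs : ω ∈ s <;> by_cases ht : ω ∈ t <;> simp [Set.indicator_apply, hs, ht]

omit [MeasurableSpace Ω] [IsProbabilityMeasure μ] in
private lemma ind_mem (s : Set Ω) (ω : Ω) :
    s.indicator (fun _ => (1 : ℝ)) ω = 0 ∨ s.indicator (fun _ => (1 : ℝ)) ω = 1 := by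
  by_cases hs : ω ∈ s <;> simp [Set.indicator_apply, hs]

private lemma aux8 (x1 x2 x3 x4 y1 y2 y3 y4 : ℝ)
    (hx1 : x1 = 0 ∨ x1 = 1) (hx2 : x2 = 0 ∨ x2 = 1)
    (hx3 : x3 = 0 ∨ x3 = 1) (hx4 : x4 = 0 ∨ x4 = 1)
    (hy1 : y1 = 0 ∨ y1 = 1) (hy2 : y2 = 0 ∨ y2 = 1)
    (hy3 : y3 = 0 ∨ y3 = 1) (hy4 : y4 = 0 ∨ y4 = 1) :
    x1 * y1 + x1 * y2 + x1 * y3 + x1 * y4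
      + x2 * y1 + x2 * y2 + x2 * y3 - x2 * y4
      + x3 * y1 + x3 * y2 - x3 * y3
      + x4 * y1 - x4 * y2
      - x1 - 3 * y1 - 2 * y2 - y3 ≤ 0 := by
  rcases hx1 with rfl | rfl <;> rcases hx2 with rfl | rfl <;>
    rcases hx3 with rfl | rfl <;> rcases hx4 with rfl | rfl <;>
    rcases hy1 with rfl | rfl <;> rcases hy2 with rfl | rfl <;>
    rcases hy3 with rfl | rfl <;> rcases hy4 with rfl | rfl <;> norm_num

end Aux

/-- The Collins-Gisin extreme Bell-type inequality `I₄₄₂₂ ≤ 0` (inequality (67)): for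
hidden-variable events `E i` (Alice) and `F k` (Bob) in a probability space `(Ω, μ)`,
`∑_{i,k} γ_{ik} μ(E_i ∩ F_k) − μ(E₁) − 3μ(F₁) − 2μ(F₂) − μ(F₃) ≤ 0`. -/
theorem stmt_15 {Ω : Type*} [MeasurableSpace Ω] (μ : Measure Ω) [IsProbabilityMeasure μ]
    (E F : Fin 4 → Set Ω)
    (hE : ∀ i, MeasurableSet (E i)) (hF : ∀ k, MeasurableSet (F k)) :
    (∑ i, ∑ k,
        (!![(1 : ℝ), 1, 1, 1; 1, 1, 1, -1; 1, 1, -1, 0; 1, -1, 0, 0] i k) *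
          (μ (E i ∩ F k)).toReal)
      - (μ (E 0)).toReal - 3 * (μ (F 0)).toReal - 2 * (μ (F 1)).toReal
      - (μ (F 2)).toReal ≤ 0 := by
  have hEF : ∀ i k, MeasurableSet (E i ∩ F k) := fun i k => (hE i).inter (hF k)
  have hint1 : ∀ i k : Fin 4, Integrable (fun ω =>
      (!![(1 : ℝ), 1, 1, 1; 1, 1, 1, -1; 1, 1, -1, 0; 1, -1, 0, 0] i k) *
        (E i ∩ F k).indicator (fun _ => (1 : ℝ)) ω) μ :=
    fun i k => (ind_int μ _ (hEF i k)).const_mul _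
  have hsum : Integrable (fun ω => ∑ i, ∑ k,
      (!![(1 : ℝ), 1, 1, 1; 1, 1, 1, -1; 1, 1, -1, 0; 1, -1, 0, 0] i k) *
        (E i ∩ F k).indicator (fun _ => (1 : ℝ)) ω) μ :=
    integrable_finset_sum _ (fun i _ => integrable_finset_sum _ (fun k _ => hint1 i k))
  have key : (∑ i, ∑ k,
        (!![(1 : ℝ), 1, 1, 1; 1, 1, 1, -1; 1, 1, -1, 0; 1, -1, 0, 0] i k) *
          (μ (E i ∩ F k)).toReal)
      - (μ (E 0)).toReal - 3 * (μ (F 0)).toReal - 2 * (μ (F 1)).toReal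
      - (μ (F 2)).toReal
      = ∫ ω, ((∑ i, ∑ k,
          (!![(1 : ℝ), 1, 1, 1; 1, 1, 1, -1; 1, 1, -1, 0; 1, -1, 0, 0] i k) *
            (E i ∩ F k).indicator (fun _ => (1 : ℝ)) ω)
        - (E 0).indicator (fun _ => (1 : ℝ)) ω
        - 3 * (F 0).indicator (fun _ => (1 : ℝ)) ω
        - 2 * (F 1).indicator (fun _ => (1 : ℝ)) ω
        - (F 2).indicator (fun _ => (1 : ℝ)) ω) ∂μ := by
    rw [integral_sub, integral_sub, integral_sub, integral_sub,
      integral_finset_sum _ (fun i _ => integrable_finset_sum _ (fun k _ => hint1 i k))]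
    · congr 1
      · congr 1
        · congr 1
          · congr 1
            · refine Finset.sum_congr rfl (fun i _ => ?_)
              rw [integral_finset_sum _ (fun k _ => hint1 i k)]
              refine Finset.sum_congr rfl (fun k _ => ?_)
              rw [integral_const_mul, ← ind_eq μ _ (hEF i k)]
            · exact ind_eq μ _ (hE 0)
          · rw [integral_const_mul, ← ind_eq μ _ (hF 0)]
        · rw [integral_const_mul, ← ind_eq μ _ (hF 1)]
      · exact ind_eq μ _ (hF 2)
    · exact hsum
    · exact ind_int μ _ (hE 0)
    · exact hsum.sub (ind_int μ _ (hE 0))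
    · exact (ind_int μ _ (hF 0)).const_mul _
    · exact (hsum.sub (ind_int μ _ (hE 0))).sub ((ind_int μ _ (hF 0)).const_mul _)
    · exact (ind_int μ _ (hF 1)).const_mul _
    · exact ((hsum.sub (ind_int μ _ (hE 0))).sub ((ind_int μ _ (hF 0)).const_mul _)).sub
        ((ind_int μ _ (hF 1)).const_mul _)
    · exact ind_int μ _ (hF 2)
  rw [key]
  apply integral_nonpos
  intro ω
  have h := aux8 ((E 0).indicator (fun _ => (1 : ℝ)) ω) ((E 1).indicator (fun _ => (1 : ℝ)) ω)
    ((E 2).indicator (fun _ => (1 : ℝ)) ω) ((E 3).indicator (fun _ => (1 : ℝ)) ω)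
    ((F 0).indicator (fun _ => (1 : ℝ)) ω) ((F 1).indicator (fun _ => (1 : ℝ)) ω)
    ((F 2).indicator (fun _ => (1 : ℝ)) ω) ((F 3).indicator (fun _ => (1 : ℝ)) ω)
    (ind_mem _ _) (ind_mem _ _) (ind_mem _ _) (ind_mem _ _)
    (ind_mem _ _) (ind_mem _ _) (ind_mem _ _) (ind_mem _ _)
  simp only [Pi.zero_apply, Fin.sum_univ_four, ind_inter]
  norm_num [Matrix.cons_val_zero, Matrix.cons_val_one, Matrix.head_cons,
    Matrix.cons_val_two, Matrix.cons_val_three, Matrix.tail_cons,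
    Matrix.vecHead, Matrix.vecTail]
  linarith
end

section
/- Let (Ω, μ) be a probability space. For i, j ∈ {1,2} let E_i^{(j)} ⊆ Ω be measurable with E_i^{(1)} ∩ E_i^{(2)} = ∅ for each i, and for k, l ∈ {1,2} let F_k^{(l)} ⊆ Ω be measurable with F_k^{(1)} ∩ F_k^{(2)} = ∅ for each k. Let γ_{ik}^{(j,l)} be the entries of the 4 × 4 matrix with rows (1,1,0,1), (1,0,1,1), (0,1,0,−1), (1,1,−1,−1), where the double indices (i,j) and (k,l) are ordered (1,1),(1,2),(2,1),(2,2). Then ∑_{i,j,k,l ∈ {1,2}} γ_{ik}^{(j,l)} μ(E_i^{(j)} ∩ F_k^{(l)}) − μ(E_1^{(1)}) − μ(E_1^{(2)}) − μ(F_1^{(1)}) − μ(F_1^{(2)}) ≤ 0. -/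
open MeasureTheory

def pairIdx (i j : Fin 2) : Fin 4 :=
  ⟨2 * i.val + j.val, by have := i.isLt; have := j.isLt; omega⟩

noncomputable def g2233 (i j k l : Fin 2) : ℝ :=
  !![(1 : ℝ), 1, 0, 1; 1, 0, 1, 1; 0, 1, 0, -1; 1, 1, -1, -1] (pairIdx i j) (pairIdx k l)

lemma key8 (x1 x2 x3 x4 y1 y2 y3 y4 : ℝ)
    (h1 : x1 = 0 ∨ x1 = 1) (h2 : x2 = 0 ∨ x2 = 1) (h3 : x3 = 0 ∨ x3 = 1)
    (h4 : x4 = 0 ∨ x4 = 1) (h5 : y1 = 0 ∨ y1 = 1) (h6 : y2 = 0 ∨ y2 = 1)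
    (h7 : y3 = 0 ∨ y3 = 1) (h8 : y4 = 0 ∨ y4 = 1)
    (hd1 : x1 * x2 = 0) (hd2 : x3 * x4 = 0) (hd3 : y1 * y2 = 0) (hd4 : y3 * y4 = 0) :
    x1 * (y1 + y2 + y4) + x2 * (y1 + y3 + y4) + x3 * (y2 - y4)
      + x4 * (y1 + y2 - y3 - y4) - x1 - x2 - y1 - y2 ≤ 0 := by
  rcases h1 with h|h <;> subst h <;>
  rcases h2 with h|h <;> subst h <;>
  rcases h3 with h|h <;> subst h <;>
  rcases h4 with h|h <;> subst h <;>
  rcases h5 with h|h <;> subst h <;>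
  rcases h6 with h|h <;> subst h <;>
  rcases h7 with h|h <;> subst h <;>
  rcases h8 with h|h <;> subst h <;>
  norm_num at *

lemma key (a b : Fin 2 → Fin 2 → ℝ)
    (ha : ∀ i j, a i j = 0 ∨ a i j = 1) (hb : ∀ k l, b k l = 0 ∨ b k l = 1)
    (hda : ∀ i, a i 0 * a i 1 = 0) (hdb : ∀ k, b k 0 * b k 1 = 0) :
    (∑ i, ∑ j, ∑ k, ∑ l, g2233 i j k l * (a i j * b k l))
      - a 0 0 - a 0 1 - b 0 0 - b 0 1 ≤ 0 := by
  have h := key8 (a 0 0) (a 0 1) (a 1 0) (a 1 1) (b 0 0) (b 0 1) (b 1 0) (b 1 1)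
    (ha 0 0) (ha 0 1) (ha 1 0) (ha 1 1) (hb 0 0) (hb 0 1) (hb 1 0) (hb 1 1)
    (hda 0) (hda 1) (hdb 0) (hdb 1)
  calc (∑ i, ∑ j, ∑ k, ∑ l, g2233 i j k l * (a i j * b k l))
      - a 0 0 - a 0 1 - b 0 0 - b 0 1
      = a 0 0 * (b 0 0 + b 0 1 + b 1 1) + a 0 1 * (b 0 0 + b 1 0 + b 1 1)
        + a 1 0 * (b 0 1 - b 1 1) + a 1 1 * (b 0 0 + b 0 1 - b 1 0 - b 1 1)
        - a 0 0 - a 0 1 - b 0 0 - b 0 1 := by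
        simp only [Fin.sum_univ_two, g2233, pairIdx]
        norm_num
        ring
    _ ≤ 0 := h

/-- The extreme Bell-type inequality `I₂₂₃₃ ≤ 0` (inequality (77)): for hidden-variable
events `E i j` (Alice, disjoint in `j` for each setting `i`) and `F k l` (Bob, disjoint
in `l` for each setting `k`) in a probability space `(Ω, μ)`,
`∑ γ_{ik}^{(j,l)} μ(E_i^{(j)} ∩ F_k^{(l)}) − μ(E₁^{(1)}) − μ(E₁^{(2)}) − μ(F₁^{(1)}) −
μ(F₁^{(2)}) ≤ 0`. -/
theorem stmt_17 {Ω : Type*} [MeasurableSpace Ω] (μ : Measure Ω) [IsProbabilityMeasure μ]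
    (E F : Fin 2 → Fin 2 → Set Ω)
    (hEm : ∀ i j, MeasurableSet (E i j)) (hFm : ∀ k l, MeasurableSet (F k l))
    (hEd : ∀ i, E i 0 ∩ E i 1 = ∅) (hFd : ∀ k, F k 0 ∩ F k 1 = ∅) :
    (∑ i, ∑ j, ∑ k, ∑ l, g2233 i j k l * (μ (E i j ∩ F k l)).toReal)
      - (μ (E 0 0)).toReal - (μ (E 0 1)).toReal
      - (μ (F 0 0)).toReal - (μ (F 0 1)).toReal ≤ 0 := by
  classical
  -- pointwise product of indicators equals the indicator of the intersection
  have heq : ∀ i j k l, (fun ω => g2233 i j k l *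
        ((E i j).indicator (1 : Ω → ℝ) ω * (F k l).indicator (1 : Ω → ℝ) ω))
      = fun ω => g2233 i j k l * (E i j ∩ F k l).indicator (1 : Ω → ℝ) ω := by
    intro i j k l
    funext ω
    rw [Set.inter_indicator_one]
    rfl
  -- integrability facts
  have hI : ∀ (s : Set Ω), MeasurableSet s → Integrable (s.indicator (1 : Ω → ℝ)) μ :=
    fun s hs => (integrable_const 1).indicator hs
  have hfint : ∀ i j k l, Integrable (fun ω => g2233 i j k l *
      ((E i j).indicator (1 : Ω → ℝ) ω * (F k l).indicator (1 : Ω → ℝ) ω)) μ := by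
    intro i j k l
    rw [heq i j k l]
    exact (hI _ ((hEm i j).inter (hFm k l))).const_mul _
  have hSint : Integrable (fun ω => ∑ i, ∑ j, ∑ k, ∑ l, g2233 i j k l *
      ((E i j).indicator (1 : Ω → ℝ) ω * (F k l).indicator (1 : Ω → ℝ) ω)) μ := by
    apply integrable_finset_sum; intro i _
    apply integrable_finset_sum; intro j _
    apply integrable_finset_sum; intro k _
    apply integrable_finset_sum; intro l _
    exact hfint i j k l
  -- each term of the big sum as an integral
  have step : ∀ i j k l, ∫ ω, g2233 i j k l *
        ((E i j).indicator (1 : Ω → ℝ) ω * (F k l).indicator (1 : Ω → ℝ) ω) ∂μ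
      = g2233 i j k l * (μ (E i j ∩ F k l)).toReal := by
    intro i j k l
    rw [heq i j k l, integral_const_mul,
      integral_indicator_one ((hEm i j).inter (hFm k l))]
    rfl
  have hsum : (∑ i, ∑ j, ∑ k, ∑ l, g2233 i j k l * (μ (E i j ∩ F k l)).toReal)
      = ∫ ω, ∑ i, ∑ j, ∑ k, ∑ l, g2233 i j k l *
          ((E i j).indicator (1 : Ω → ℝ) ω * (F k l).indicator (1 : Ω → ℝ) ω) ∂μ := by
    rw [integral_finset_sum _ (fun i _ => integrable_finset_sum _ (fun j _ =>
      integrable_finset_sum _ (fun k _ => integrable_finset_sum _ (fun l _ =>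
        hfint i j k l))))]
    refine Finset.sum_congr rfl fun i _ => ?_
    rw [integral_finset_sum _ (fun j _ => integrable_finset_sum _ (fun k _ =>
      integrable_finset_sum _ (fun l _ => hfint i j k l)))]
    refine Finset.sum_congr rfl fun j _ => ?_
    rw [integral_finset_sum _ (fun k _ => integrable_finset_sum _ (fun l _ =>
      hfint i j k l))]
    refine Finset.sum_congr rfl fun k _ => ?_
    rw [integral_finset_sum _ (fun l _ => hfint i j k l)]
    exact Finset.sum_congr rfl fun l _ => (step i j k l).symm
  -- express the whole LHS as a single integral
  have hG : (∑ i, ∑ j, ∑ k, ∑ l, g2233 i j k l * (μ (E i j ∩ F k l)).toReal)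
      - (μ (E 0 0)).toReal - (μ (E 0 1)).toReal
      - (μ (F 0 0)).toReal - (μ (F 0 1)).toReal
      = ∫ ω, ((∑ i, ∑ j, ∑ k, ∑ l, g2233 i j k l *
            ((E i j).indicator (1 : Ω → ℝ) ω * (F k l).indicator (1 : Ω → ℝ) ω))
          - (E 0 0).indicator (1 : Ω → ℝ) ω - (E 0 1).indicator (1 : Ω → ℝ) ω
          - (F 0 0).indicator (1 : Ω → ℝ) ω - (F 0 1).indicator (1 : Ω → ℝ) ω) ∂μ := by
    have A1 : Integrable (fun ω => (∑ i, ∑ j, ∑ k, ∑ l, g2233 i j k l *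
        ((E i j).indicator (1 : Ω → ℝ) ω * (F k l).indicator (1 : Ω → ℝ) ω))
        - (E 0 0).indicator (1 : Ω → ℝ) ω) μ := hSint.sub (hI _ (hEm 0 0))
    have A2 : Integrable (fun ω => (∑ i, ∑ j, ∑ k, ∑ l, g2233 i j k l *
        ((E i j).indicator (1 : Ω → ℝ) ω * (F k l).indicator (1 : Ω → ℝ) ω))
        - (E 0 0).indicator (1 : Ω → ℝ) ω - (E 0 1).indicator (1 : Ω → ℝ) ω) μ :=
      A1.sub (hI _ (hEm 0 1))
    have A3 : Integrable (fun ω => (∑ i, ∑ j, ∑ k, ∑ l, g2233 i j k l *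
        ((E i j).indicator (1 : Ω → ℝ) ω * (F k l).indicator (1 : Ω → ℝ) ω))
        - (E 0 0).indicator (1 : Ω → ℝ) ω - (E 0 1).indicator (1 : Ω → ℝ) ω
        - (F 0 0).indicator (1 : Ω → ℝ) ω) μ := A2.sub (hI _ (hFm 0 0))
    rw [hsum, ← measureReal_def, ← measureReal_def, ← measureReal_def, ← measureReal_def,
      ← integral_indicator_one (hEm 0 0), ← integral_indicator_one (hEm 0 1),
      ← integral_indicator_one (hFm 0 0), ← integral_indicator_one (hFm 0 1),
      ← integral_sub hSint (hI _ (hEm 0 0)),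
      ← integral_sub A1 (hI _ (hEm 0 1)),
      ← integral_sub A2 (hI _ (hFm 0 0)),
      ← integral_sub A3 (hI _ (hFm 0 1))]
  rw [hG]
  apply integral_nonpos
  intro ω
  refine key (fun i j => (E i j).indicator (1 : Ω → ℝ) ω)
    (fun k l => (F k l).indicator (1 : Ω → ℝ) ω) ?_ ?_ ?_ ?_
  · intro i j; by_cases h : ω ∈ E i j <;> simp [h]
  · intro k l; by_cases h : ω ∈ F k l <;> simp [h]
  · intro i
    by_cases h0 : ω ∈ E i 0 <;> by_cases h1 : ω ∈ E i 1 <;> simp [h0, h1]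
    have : ω ∈ E i 0 ∩ E i 1 := ⟨h0, h1⟩
    rw [hEd i] at this
    exact this
  · intro k
    by_cases h0 : ω ∈ F k 0 <;> by_cases h1 : ω ∈ F k 1 <;> simp [h0, h1]
    have : ω ∈ F k 0 ∩ F k 1 := ⟨h0, h1⟩
    rw [hFd k] at this
    exact this
end

section
/- Let (Ω, μ) be a probability space, let (L, ≤) be a linearly ordered set with a measurable-space structure making the order relation measurable, and let A_1, A_2, B_1, B_2 : Ω → L be measurable maps (A_s is Alice's outcome under setting s, B_s is Bob's outcome under setting s). Then μ({ω : B_1(ω) ≥ A_1(ω)}) + μ({ω : A_1(ω) ≥ B_2(ω)}) + μ({ω : B_2(ω) ≥ A_2(ω)}) + μ({ω : A_2(ω) ≥ B_1(ω)}) ≥ 1. -/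
open MeasureTheory

/-- The Zohren-Gill tight LHV inequality (84'): for an LHV model `(Ω, μ)` with measurable
outcome maps `A s` (Alice) and `B s` (Bob), `s ∈ {1,2}` (0-indexed), into a linearly
ordered measurable space `L` with measurable order relation,
`μ(B₁ ≥ A₁) + μ(A₁ ≥ B₂) + μ(B₂ ≥ A₂) + μ(A₂ ≥ B₁) ≥ 1`. -/
theorem stmt_19 {Ω : Type*} [MeasurableSpace Ω] (μ : Measure Ω) [IsProbabilityMeasure μ]
    {L : Type*} [LinearOrder L] [MeasurableSpace L]
    (hord : MeasurableSet {p : L × L | p.1 ≤ p.2})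
    (A B : Fin 2 → Ω → L)
    (hA : ∀ s, Measurable (A s)) (hB : ∀ s, Measurable (B s)) :
    1 ≤ (μ {ω | A 0 ω ≤ B 0 ω}).toReal + (μ {ω | B 1 ω ≤ A 0 ω}).toReal +
        (μ {ω | A 1 ω ≤ B 1 ω}).toReal + (μ {ω | B 0 ω ≤ A 1 ω}).toReal := by
  set S1 := {ω | A 0 ω ≤ B 0 ω}
  set S2 := {ω | B 1 ω ≤ A 0 ω}
  set S3 := {ω | A 1 ω ≤ B 1 ω}
  set S4 := {ω | B 0 ω ≤ A 1 ω}
  have hcover : (Set.univ : Set Ω) ⊆ S1 ∪ S2 ∪ S3 ∪ S4 := by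
    intro ω _
    by_contra h
    simp only [Set.mem_union, S1, S2, S3, S4, Set.mem_setOf_eq, not_or, not_le] at h
    obtain ⟨⟨⟨h1, h2⟩, h3⟩, h4⟩ := h
    exact absurd (h1.trans (h2.trans (h3.trans h4))) (lt_irrefl _)
  have hle : (1 : ENNReal) ≤ μ S1 + μ S2 + μ S3 + μ S4 := by
    calc (1 : ENNReal) = μ Set.univ := (measure_univ).symm
    _ ≤ μ (S1 ∪ S2 ∪ S3 ∪ S4) := measure_mono hcover
    _ ≤ μ (S1 ∪ S2 ∪ S3) + μ S4 := measure_union_le _ _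
    _ ≤ μ (S1 ∪ S2) + μ S3 + μ S4 := by gcongr; exact measure_union_le _ _
    _ ≤ μ S1 + μ S2 + μ S3 + μ S4 := by gcongr; exact measure_union_le _ _
  have hfin : ∀ (S : Set Ω), μ S ≠ ⊤ := fun S => (measure_lt_top μ S).ne
  have := ENNReal.toReal_mono (by
      simp [ENNReal.add_ne_top, hfin]) hle
  simpa [ENNReal.toReal_add, hfin, ENNReal.add_ne_top] using this
end
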